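/- arXiv:1503.04644 — 4 statements merged into one kernel-verified Lean document; each statement's English description precedes it below -/
import Mathlib

section
/- Let m ≥ 2, 0 ≤ β < 1, let k(z) = z + ∑_{n≥2} k_n z^n be bi-univalent with k₂ ≠ 0 and k₃ ≠ 0, and let f(z) = z + ∑_{n≥2} a_n z^n belong to the class BR^k(m; β). Then |a₂| ≤ min{ √(m(1−β)/|k₃|) , m(1−β)/|k₂| }. -/
open MeasureTheory Set Metric Complex

noncomputable section

/-- The `n`-th MacLaurin coefficient of `f`, i.e. `f⁽ⁿ⁾(0)/n!`. -/
def mc (f : ℂ → ℂ) (n : ℕ) : ℂ := iteratedDeriv n f 0 / (n.factorial : ℂ)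

/-- The open unit disk in `ℂ`. -/
def unitDisk : Set ℂ := Metric.ball (0 : ℂ) 1

/-- The kernel `(1 - z e^{it})/(1 + z e^{it})`. -/
def pmKernel (z : ℂ) (t : ℝ) : ℂ :=
  (1 - z * Complex.exp (t * Complex.I)) / (1 + z * Complex.exp (t * Complex.I))

/-- The class `P_m` of functions with bounded boundary rotation: `p` is analytic on the unit
disk, `p 0 = 1`, and `p` is represented against a finite signed Borel measure
`μ = μp - μn` on `[0, 2π]` with `μ([0,2π]) = 1` and total variation `‖μ‖ ≤ m/2`. -/
def MemPm (m : ℝ) (p : ℂ → ℂ) : Prop :=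
  AnalyticOnNhd ℂ p unitDisk ∧ p 0 = 1 ∧
  ∃ μp μn : Measure ℝ, IsFiniteMeasure μp ∧ IsFiniteMeasure μn ∧
    (μp (Set.Icc 0 (2 * Real.pi))).toReal - (μn (Set.Icc 0 (2 * Real.pi))).toReal = 1 ∧
    (μp (Set.Icc 0 (2 * Real.pi))).toReal + (μn (Set.Icc 0 (2 * Real.pi))).toReal ≤ m / 2 ∧
    ∀ z ∈ unitDisk, p z =
      (∫ t in Set.Icc 0 (2 * Real.pi), pmKernel z t ∂μp) -
      (∫ t in Set.Icc 0 (2 * Real.pi), pmKernel z t ∂μn)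

/-- `p ∈ P_m(β)` iff `p = β + (1 - β) q` on the unit disk for some `q ∈ P_m`. -/
def MemPmBeta (m β : ℝ) (p : ℂ → ℂ) : Prop :=
  ∃ q : ℂ → ℂ, MemPm m q ∧ ∀ z ∈ unitDisk, p z = (β : ℂ) + (1 - (β : ℂ)) * q z

/-- `f` and `g` form a bi-univalent pair: `f` is analytic and injective on the unit disk with
`f 0 = 0`, `f' 0 = 1`, and `g` is the univalent analytic continuation of `f⁻¹` to the unit
disk: `g` is analytic and injective on the unit disk, `g 0 = 0`, and `f (g w) = w` for
`|w| < 1/4`. -/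
def BiUnivalentPair (f g : ℂ → ℂ) : Prop :=
  AnalyticOnNhd ℂ f unitDisk ∧ f 0 = 0 ∧ deriv f 0 = 1 ∧ Set.InjOn f unitDisk ∧
  AnalyticOnNhd ℂ g unitDisk ∧ Set.InjOn g unitDisk ∧ g 0 = 0 ∧
  ∀ w : ℂ, ‖w‖ < 1 / 4 → f (g w) = w

/-- MacLaurin coefficients of `(f ∗ k)(z)/z`: the constant term is `1` and the coefficient of
`z^n` for `n ≥ 1` is `a_{n+1} k_{n+1}`. -/
def brCoeff (f k : ℂ → ℂ) (n : ℕ) : ℂ := if n = 0 then 1 else mc f (n + 1) * mc k (n + 1)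

/-- The function `Φ(z) = 1 + ∑_{n≥2} a_n k_n z^{n-1}`, i.e. `(f ∗ k)(z)/z`. -/
def brFun (f k : ℂ → ℂ) (z : ℂ) : ℂ := ∑' n : ℕ, brCoeff f k n * z ^ n

/-- `f ∈ BR^k(m; β)`: `f` is bi-univalent with inverse `g`, and the series
`Φ(z) = 1 + ∑_{n≥2} a_n k_n z^{n-1}` and `Ψ(w) = 1 + ∑_{n≥2} b_n k_n w^{n-1}` converge on
the unit disk and define functions of class `P_m(β)`. -/
def MemBR (m β : ℝ) (k f g : ℂ → ℂ) : Prop :=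
  BiUnivalentPair f g ∧
  (∀ z ∈ unitDisk, Summable fun n : ℕ => brCoeff f k n * z ^ n) ∧
  (∀ w ∈ unitDisk, Summable fun n : ℕ => brCoeff g k n * w ^ n) ∧
  MemPmBeta m β (brFun f k) ∧ MemPmBeta m β (brFun g k)



section Helpers

lemma norm34 : ‖((3:ℂ))/4‖ = 3/4 := by
  rw [norm_div]
  simp

lemma coeff0_eq_zero (c : ℕ → ℂ)
    (hs : ∀ z : ℂ, ‖z‖ < 1 → Summable fun n => c n * z ^ n)
    (h0 : ∀ z : ℂ, ‖z‖ < 1 → z ≠ 0 → ∑' n, c n * z ^ n = 0) :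
    c 0 = 0 := by
  set S : ℝ := ∑' n, ‖c n * ((3:ℂ)/4) ^ n‖ with hS
  have hs34 : Summable fun n => c n * ((3:ℂ)/4) ^ n := by
    apply hs; rw [norm34]; norm_num
  have hsn : Summable fun n => ‖c n * ((3:ℂ)/4) ^ n‖ := by
    rwa [summable_norm_iff]
  have hSnn : 0 ≤ S := tsum_nonneg fun n => norm_nonneg _
  have hcb : ∀ n, ‖c n‖ ≤ S * ((4:ℝ)/3) ^ n := by
    intro n
    have h1 : ‖c n * ((3:ℂ)/4) ^ n‖ ≤ S := Summable.le_tsum hsn n fun _ _ => norm_nonneg _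
    rw [norm_mul, norm_pow, norm34] at h1
    have h3 : (0:ℝ) < ((3:ℝ)/4) ^ n := by positivity
    rw [← le_div_iff₀ h3] at h1
    calc ‖c n‖ ≤ S / ((3:ℝ)/4) ^ n := h1
      _ = S * ((4:ℝ)/3) ^ n := by rw [div_eq_mul_inv, ← inv_pow]; norm_num
  have key : ∀ z : ℂ, z ≠ 0 → ‖z‖ ≤ 1/2 → ‖c 0‖ ≤ 4 * S * ‖z‖ := by
    intro z hz hz2
    have hz1 : ‖z‖ < 1 := lt_of_le_of_lt hz2 (by norm_num)
    have hsz := hs z hz1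
    have hsplit := Summable.tsum_eq_zero_add hsz
    rw [h0 z hz1 hz, pow_zero, mul_one] at hsplit
    have hc0 : c 0 = - ∑' n, c (n + 1) * z ^ (n + 1) :=
      eq_neg_of_add_eq_zero_left hsplit.symm
    have hterm : ∀ n : ℕ, ‖c (n + 1) * z ^ (n + 1)‖ ≤ (4 * S * ‖z‖ / 3) * ((2:ℝ)/3) ^ n := by
      intro n
      rw [norm_mul, norm_pow]
      have hp : ((1:ℝ)/2) ^ n * ((4:ℝ)/3) ^ n = ((2:ℝ)/3) ^ n := by
        rw [← mul_pow]; norm_num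
      calc ‖c (n+1)‖ * ‖z‖ ^ (n+1)
          ≤ (S * ((4:ℝ)/3) ^ (n+1)) * (‖z‖ * (1/2) ^ n) := by
            apply mul_le_mul (hcb _) ?_ (by positivity) (by positivity)
            rw [pow_succ']
            exact mul_le_mul_of_nonneg_left (pow_le_pow_left₀ (norm_nonneg _) hz2 n) (norm_nonneg _)
        _ = (4 * S * ‖z‖ / 3) * ((2:ℝ)/3) ^ n := by
            rw [pow_succ]
            linear_combination (4/3 : ℝ) * S * ‖z‖ * hp
    have hgs : Summable fun n : ℕ => (4 * S * ‖z‖ / 3) * ((2:ℝ)/3) ^ n :=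
      (summable_geometric_of_lt_one (by norm_num) (by norm_num)).mul_left _
    have hns : Summable fun n : ℕ => ‖c (n + 1) * z ^ (n + 1)‖ :=
      Summable.of_nonneg_of_le (fun n => norm_nonneg _) hterm hgs
    calc ‖c 0‖ = ‖∑' n, c (n + 1) * z ^ (n + 1)‖ := by rw [hc0, norm_neg]
      _ ≤ ∑' n, ‖c (n + 1) * z ^ (n + 1)‖ := norm_tsum_le_tsum_norm hns
      _ ≤ ∑' n : ℕ, (4 * S * ‖z‖ / 3) * ((2:ℝ)/3) ^ n := Summable.tsum_le_tsum hterm hns hgs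
      _ = (4 * S * ‖z‖ / 3) * (1 - (2:ℝ)/3)⁻¹ := by
          rw [tsum_mul_left, tsum_geometric_of_lt_one (by norm_num) (by norm_num)]
      _ = 4 * S * ‖z‖ := by norm_num
  -- conclude c 0 = 0
  have : ∀ ε : ℝ, 0 < ε → ‖c 0‖ ≤ ε := by
    intro ε hε
    set r : ℝ := min (1/2) (ε / (4 * S + 1)) with hr
    have hrpos : 0 < r := by
      apply lt_min (by norm_num)
      positivity
    have hz : (r : ℂ) ≠ 0 := by
      simp only [ne_eq, Complex.ofReal_eq_zero]
      exact ne_of_gt hrpos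
    have hznorm : ‖(r : ℂ)‖ = r := by
      rw [Complex.norm_real, Real.norm_eq_abs, abs_of_pos hrpos]
    have h1 := key r hz (by rw [hznorm]; exact min_le_left _ _)
    rw [hznorm] at h1
    calc ‖c 0‖ ≤ 4 * S * r := h1
      _ ≤ (4 * S + 1) * (ε / (4 * S + 1)) := by
          apply mul_le_mul (by linarith) (min_le_right _ _) (le_of_lt hrpos) (by positivity)
      _ = ε := by field_simp
  have := le_of_forall_pos_le_add (by intro ε hε; linarith [this ε hε] : ∀ ε > 0, ‖c 0‖ ≤ 0 + ε)
  simpa using norm_le_zero_iff.mp (by linarith)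

lemma coeff_eq_zero (c : ℕ → ℂ)
    (hs : ∀ z : ℂ, ‖z‖ < 1 → Summable fun n => c n * z ^ n)
    (h0 : ∀ z : ℂ, ‖z‖ < 1 → z ≠ 0 → ∑' n, c n * z ^ n = 0) :
    ∀ n, c n = 0 := by
  intro n
  induction n generalizing c with
  | zero => exact coeff0_eq_zero c hs h0
  | succ n ih =>
    have hc0 : c 0 = 0 := coeff0_eq_zero c hs h0
    -- shifted series
    have hs' : ∀ z : ℂ, ‖z‖ < 1 → Summable fun k => c (k + 1) * z ^ k := by
      intro z hz
      rcases eq_or_ne z 0 with rfl | hzne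
      · apply summable_of_ne_finset_zero (s := {0})
        intro k hk
        have : k ≠ 0 := by simpa using hk
        simp [zero_pow this]
      · have h1 : Summable fun k => c (k + 1) * z ^ (k + 1) :=
          ((summable_nat_add_iff (f := fun n => c n * z ^ n) 1).mpr (hs z hz))
        have h2 := h1.mul_right z⁻¹
        apply h2.congr
        intro k
        field_simp
        ring
    have h0' : ∀ z : ℂ, ‖z‖ < 1 → z ≠ 0 → ∑' k, c (k + 1) * z ^ k = 0 := by
      intro z hz hzne
      have hsplit := Summable.tsum_eq_zero_add (hs z hz)
      rw [h0 z hz hzne, pow_zero, mul_one, hc0, zero_add] at hsplit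
      have hmul : ∑' k, c (k + 1) * z ^ (k + 1) = z * ∑' k, c (k + 1) * z ^ k := by
        rw [← tsum_mul_left]
        congr 1; funext k; ring
      rw [hmul] at hsplit
      exact (mul_eq_zero.mp hsplit.symm).resolve_left hzne
    exact ih (fun k => c (k + 1)) hs' h0'

/-- coefficients of the kernel -/
def kc (n : ℕ) : ℂ := if n = 0 then 1 else 2 * (-1) ^ n

lemma kc_zero : kc 0 = 1 := rfl
lemma norm_kc_le (n : ℕ) : ‖kc n‖ ≤ 2 := by
  unfold kc
  split
  · norm_num
  · rw [norm_mul, norm_pow, norm_neg, norm_one, one_pow, mul_one]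
    norm_num

lemma kernel_hasSum {w : ℂ} (hw : ‖w‖ < 1) :
    HasSum (fun n : ℕ => kc n * w ^ n) ((1 - w) / (1 + w)) := by
  have hne : (1 : ℂ) + w ≠ 0 := by
    intro h
    have : w = -1 := by linear_combination h
    rw [this] at hw; simp at hw
  have h1 : HasSum (fun n : ℕ => (-w) ^ n) (1 - (-w))⁻¹ :=
    hasSum_geometric_of_norm_lt_one (by simpa using hw)
  have h2 := h1.mul_left 2
  have h3 : HasSum (fun n : ℕ => if n = 0 then (1:ℂ) else 0) 1 := by
    simpa using hasSum_ite_eq (0 : ℕ) (1 : ℂ)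
  have h4 := h2.sub h3
  have heq : (fun n : ℕ => 2 * (-w) ^ n - if n = 0 then (1:ℂ) else 0)
      = fun n => kc n * w ^ n := by
    funext n
    rcases eq_or_ne n 0 with rfl | hn
    · norm_num [kc]
    · rw [if_neg hn, neg_pow]
      unfold kc
      rw [if_neg hn]
      ring
  rw [heq] at h4
  rw [show (1 - w) / (1 + w) = 2 * (1 - -w)⁻¹ - 1 by rw [sub_neg_eq_add]; field_simp; ring]
  exact h4

lemma exp_pow_norm (t : ℝ) (n : ℕ) : ‖Complex.exp ((t:ℂ) * Complex.I) ^ n‖ = 1 := by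
  rw [norm_pow, Complex.norm_exp_ofReal_mul_I, one_pow]

/-- moments -/
def mom (ν : Measure ℝ) (n : ℕ) : ℂ :=
  ∫ t in Set.Icc 0 (2 * Real.pi), Complex.exp ((t:ℂ) * Complex.I) ^ n ∂ν

lemma mom_zero (ν : Measure ℝ) : mom ν 0 = ((ν (Set.Icc 0 (2 * Real.pi))).toReal : ℂ) := by
  unfold mom
  simp [MeasureTheory.integral_const, measureReal_def]

lemma norm_mom_le (ν : Measure ℝ) [IsFiniteMeasure ν] (n : ℕ) :
    ‖mom ν n‖ ≤ (ν (Set.Icc 0 (2 * Real.pi))).toReal := by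
  unfold mom
  calc ‖∫ t in Set.Icc 0 (2 * Real.pi), Complex.exp ((t:ℂ) * Complex.I) ^ n ∂ν‖
      ≤ ∫ t in Set.Icc 0 (2 * Real.pi), ‖Complex.exp ((t:ℂ) * Complex.I) ^ n‖ ∂ν :=
        norm_integral_le_integral_norm _
    _ = ∫ t in Set.Icc 0 (2 * Real.pi), (1:ℝ) ∂ν := by
        apply integral_congr_ae; filter_upwards with t; exact exp_pow_norm t n
    _ = (ν (Set.Icc 0 (2 * Real.pi))).toReal := by simp [measureReal_def]

lemma integrable_exp_pow (ν : Measure ℝ) [IsFiniteMeasure ν] (n : ℕ) (a : ℂ) :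
    Integrable (fun t : ℝ => a * Complex.exp ((t:ℂ) * Complex.I) ^ n)
      (ν.restrict (Set.Icc 0 (2 * Real.pi))) := by
  apply (integrable_const ‖a‖).mono'
  · apply Continuous.aestronglyMeasurable
    continuity
  · filter_upwards with t
    rw [norm_mul, exp_pow_norm, mul_one]

lemma integral_kernel (ν : Measure ℝ) [IsFiniteMeasure ν] (z : ℂ) (hz : ‖z‖ < 1) :
    ∫ t in Set.Icc 0 (2 * Real.pi), pmKernel z t ∂ν
      = ∑' n : ℕ, (kc n * mom ν n) * z ^ n := by
  set s := Set.Icc 0 (2 * Real.pi)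
  have hpt : ∀ t : ℝ, pmKernel z t
      = ∑' n : ℕ, (kc n * z ^ n) * Complex.exp ((t:ℂ) * Complex.I) ^ n := by
    intro t
    have hw : ‖z * Complex.exp ((t:ℂ) * Complex.I)‖ < 1 := by
      rw [norm_mul]
      have : ‖Complex.exp ((t:ℂ) * Complex.I)‖ = 1 := by
        simpa using exp_pow_norm t 1
      rw [this, mul_one]; exact hz
    have := (kernel_hasSum hw).tsum_eq
    unfold pmKernel
    rw [← this]
    congr 1; funext n; rw [mul_pow]; ring
  have hint : ∀ n : ℕ, Integrable
      (fun t : ℝ => (kc n * z ^ n) * Complex.exp ((t:ℂ) * Complex.I) ^ n) (ν.restrict s) :=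
    fun n => integrable_exp_pow ν n _
  have hnorm : ∀ n : ℕ, ∫ t in s, ‖(kc n * z ^ n) * Complex.exp ((t:ℂ) * Complex.I) ^ n‖ ∂ν
      = ‖kc n‖ * ‖z‖ ^ n * (ν s).toReal := by
    intro n
    have : ∀ t : ℝ, ‖(kc n * z ^ n) * Complex.exp ((t:ℂ) * Complex.I) ^ n‖
        = ‖kc n‖ * ‖z‖ ^ n := by
      intro t
      rw [norm_mul, exp_pow_norm, mul_one, norm_mul, norm_pow]
    rw [integral_congr_ae (Filter.Eventually.of_forall this)]
    simp [mul_comm, measureReal_def]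
  have hsum : Summable fun n : ℕ =>
      ∫ t in s, ‖(kc n * z ^ n) * Complex.exp ((t:ℂ) * Complex.I) ^ n‖ ∂ν := by
    apply Summable.congr (f := fun n => ‖kc n‖ * ‖z‖ ^ n * (ν s).toReal) _ fun n => (hnorm n).symm
    apply Summable.mul_right
    apply Summable.of_nonneg_of_le (fun n => by positivity)
      (fun n => mul_le_mul_of_nonneg_right (norm_kc_le n) (by positivity))
    exact (summable_geometric_of_lt_one (norm_nonneg z) hz).mul_left 2
  have hswap := integral_tsum_of_summable_integral_norm hint hsum
  calc ∫ t in s, pmKernel z t ∂ν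
      = ∫ t in s, ∑' n : ℕ, (kc n * z ^ n) * Complex.exp ((t:ℂ) * Complex.I) ^ n ∂ν := by
        apply integral_congr_ae; filter_upwards with t; exact hpt t
    _ = ∑' n : ℕ, ∫ t in s, (kc n * z ^ n) * Complex.exp ((t:ℂ) * Complex.I) ^ n ∂ν :=
        hswap.symm
    _ = ∑' n : ℕ, (kc n * mom ν n) * z ^ n := by
        congr 1; funext n
        rw [MeasureTheory.integral_const_mul]
        unfold mom; ring

lemma mem_unitDisk {z : ℂ} : z ∈ unitDisk ↔ ‖z‖ < 1 := by
  simp [unitDisk, Metric.mem_ball, dist_zero_right]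

lemma memPm_coeff (M : ℝ) (p : ℂ → ℂ) (h : MemPm M p) :
    ∃ c : ℕ → ℂ, c 0 = 1 ∧ (∀ n, ‖c (n + 1)‖ ≤ M) ∧
      ∀ z ∈ unitDisk, (Summable fun n => c n * z ^ n) ∧ p z = ∑' n, c n * z ^ n := by
  obtain ⟨-, -, μp, μn, hμp, hμn, htot, hvar, hrep⟩ := h
  set s := Set.Icc 0 (2 * Real.pi)
  refine ⟨fun n => kc n * (mom μp n - mom μn n), ?_, ?_, ?_⟩
  · show kc 0 * (mom μp 0 - mom μn 0) = 1
    rw [mom_zero, mom_zero]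
    unfold kc
    rw [if_pos rfl, one_mul, ← Complex.ofReal_sub, htot, Complex.ofReal_one]
  · intro n
    rw [norm_mul]
    have h1 : ‖mom μp (n+1) - mom μn (n+1)‖ ≤ M / 2 := by
      calc ‖mom μp (n+1) - mom μn (n+1)‖ ≤ ‖mom μp (n+1)‖ + ‖mom μn (n+1)‖ := norm_sub_le _ _
        _ ≤ (μp s).toReal + (μn s).toReal := add_le_add (norm_mom_le _ _) (norm_mom_le _ _)
        _ ≤ M / 2 := hvar
    calc ‖kc (n+1)‖ * ‖mom μp (n+1) - mom μn (n+1)‖ ≤ 2 * (M / 2) := by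
          apply mul_le_mul (norm_kc_le _) h1 (norm_nonneg _) (by norm_num)
      _ = M := by ring
  · intro z hz
    rw [mem_unitDisk] at hz
    have hb : ∀ n : ℕ, ‖kc n * (mom μp n - mom μn n) * z ^ n‖
        ≤ (2 * ((μp s).toReal + (μn s).toReal) + 2) * ‖z‖ ^ n := by
      intro n
      rw [norm_mul, norm_mul, norm_pow]
      apply mul_le_mul_of_nonneg_right _ (by positivity)
      calc ‖kc n‖ * ‖mom μp n - mom μn n‖ ≤ 2 * ((μp s).toReal + (μn s).toReal) :=
            mul_le_mul (norm_kc_le n)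
              ((norm_sub_le _ _).trans (add_le_add (norm_mom_le _ _) (norm_mom_le _ _)))
              (norm_nonneg _) (by norm_num)
        _ ≤ 2 * ((μp s).toReal + (μn s).toReal) + 2 := by linarith
    have hsum : Summable fun n => kc n * (mom μp n - mom μn n) * z ^ n := by
      apply Summable.of_norm
      apply Summable.of_nonneg_of_le (fun n => norm_nonneg _) hb
      exact ((summable_geometric_of_lt_one (norm_nonneg z) hz).mul_left _)
    refine ⟨hsum, ?_⟩
    rw [hrep z (mem_unitDisk.mpr hz), integral_kernel μp z hz, integral_kernel μn z hz]
    have hsp : Summable fun n => (kc n * mom μp n) * z ^ n := by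
      apply Summable.of_norm
      apply Summable.of_nonneg_of_le (fun n => norm_nonneg _)
        (fun n => ?_) (((summable_geometric_of_lt_one (norm_nonneg z) hz).mul_left
          (2 * (μp s).toReal)))
      rw [norm_mul, norm_mul, norm_pow]
      apply mul_le_mul_of_nonneg_right _ (by positivity)
      exact mul_le_mul (norm_kc_le n) (norm_mom_le _ _) (norm_nonneg _) (by norm_num)
    have hsn : Summable fun n => (kc n * mom μn n) * z ^ n := by
      apply Summable.of_norm
      apply Summable.of_nonneg_of_le (fun n => norm_nonneg _)
        (fun n => ?_) (((summable_geometric_of_lt_one (norm_nonneg z) hz).mul_left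
          (2 * (μn s).toReal)))
      rw [norm_mul, norm_mul, norm_pow]
      apply mul_le_mul_of_nonneg_right _ (by positivity)
      exact mul_le_mul (norm_kc_le n) (norm_mom_le _ _) (norm_nonneg _) (by norm_num)
    rw [← Summable.tsum_sub hsp hsn]
    congr 1; funext n; ring

lemma memPmBeta_coeff (M β : ℝ) (p : ℂ → ℂ) (h : MemPmBeta M β p) :
    ∃ C : ℕ → ℂ, C 0 = 1 ∧ (∀ n, ‖C (n + 1)‖ ≤ M * |1 - β|) ∧
      ∀ z ∈ unitDisk, (Summable fun n => C n * z ^ n) ∧ p z = ∑' n, C n * z ^ n := by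
  obtain ⟨q, hq, hpq⟩ := h
  obtain ⟨c, hc0, hcb, hcs⟩ := memPm_coeff M q hq
  set C : ℕ → ℂ := fun n => if n = 0 then 1 else (1 - (β:ℂ)) * c n with hC
  have hCn : ∀ n : ℕ, C (n + 1) = (1 - (β:ℂ)) * c (n + 1) := by
    intro n; simp [hC]
  refine ⟨C, rfl, ?_, ?_⟩
  · intro n
    rw [hCn, norm_mul, mul_comm]
    apply mul_le_mul (hcb n) _ (norm_nonneg _) (le_trans (norm_nonneg _) (hcb 0))
    rw [show (1 : ℂ) - (β:ℂ) = ((1 - β : ℝ) : ℂ) by push_cast; ring,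
      Complex.norm_real, Real.norm_eq_abs]
  · intro z hz
    obtain ⟨hsum, heq⟩ := hcs z hz
    have h1 : Summable fun n => (1 - (β:ℂ)) * (c n * z ^ n) := hsum.mul_left _
    have h2 : Summable fun n => C (n + 1) * z ^ (n + 1) := by
      apply ((summable_nat_add_iff (f := fun n => (1 - (β:ℂ)) * (c n * z ^ n)) 1).mpr h1).congr
      intro n
      rw [hCn]; ring
    have hsumC : Summable fun n => C n * z ^ n :=
      (summable_nat_add_iff (f := fun n => C n * z ^ n) 1).mp h2
    refine ⟨hsumC, ?_⟩
    rw [hpq z hz, heq, Summable.tsum_eq_zero_add hsumC, Summable.tsum_eq_zero_add hsum, hc0]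
    have h3 : ∑' n, C (n + 1) * z ^ (n + 1)
        = (1 - (β:ℂ)) * ∑' n, c (n + 1) * z ^ (n + 1) := by
      rw [← tsum_mul_left]
      congr 1; funext n; rw [hCn]; ring
    rw [h3]
    show (β:ℂ) + (1 - (β:ℂ)) * (1 * z ^ 0 + _) = C 0 * z ^ 0 + _
    rw [show C 0 = 1 from rfl]
    ring

lemma inverse_coeffs (f g : ℂ → ℂ) (h : BiUnivalentPair f g) :
    mc f 3 + mc g 3 = 2 * (mc f 2) ^ 2 := by
  obtain ⟨hfa, hf0, hf'0, -, hga, -, hg0, hfg⟩ := h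
  have hss : Metric.ball (0:ℂ) (1/4) ⊆ unitDisk := Metric.ball_subset_ball (by norm_num)
  set U : Set ℂ := Metric.ball (0:ℂ) (1/4) ∩ g ⁻¹' unitDisk with hUdef
  have hUopen : IsOpen U := by
    apply ContinuousOn.isOpen_inter_preimage _ Metric.isOpen_ball Metric.isOpen_ball
    exact fun w hw => ((hga w (hss hw)).continuousAt).continuousWithinAt
  have h0U : (0:ℂ) ∈ U := by
    constructor
    · simp [Metric.mem_ball]
    · show g 0 ∈ unitDisk
      rw [hg0]; simp [unitDisk, Metric.mem_ball]
  have hUd : U ⊆ unitDisk := fun w hw => hss hw.1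
  have hUg : ∀ w ∈ U, g w ∈ unitDisk := fun w hw => hw.2
  have hUq : ∀ w ∈ U, ‖w‖ < 1/4 := by
    intro w hw
    have := hw.1
    rwa [Metric.mem_ball, dist_zero_right] at this
  -- analytic derivatives
  have hf1 := hfa.deriv
  have hf2 := hf1.deriv
  have hg1 := hga.deriv
  have hg2 := hg1.deriv
  -- notation
  set F1 := deriv f; set F2 := deriv F1; set F3 := deriv F2
  set G1 := deriv g; set G2 := deriv G1; set G3 := deriv G2
  have hdg : ∀ w ∈ U, HasDerivAt g (G1 w) w :=
    fun w hw => ((hga w (hUd hw)).differentiableAt).hasDerivAt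
  have hdg1 : ∀ w ∈ U, HasDerivAt G1 (G2 w) w :=
    fun w hw => ((hg1 w (hUd hw)).differentiableAt).hasDerivAt
  have hdg2 : ∀ w ∈ U, HasDerivAt G2 (G3 w) w :=
    fun w hw => ((hg2 w (hUd hw)).differentiableAt).hasDerivAt
  have hdf : ∀ w ∈ U, HasDerivAt f (F1 (g w)) (g w) :=
    fun w hw => ((hfa _ (hUg w hw)).differentiableAt).hasDerivAt
  have hdf1 : ∀ w ∈ U, HasDerivAt F1 (F2 (g w)) (g w) :=
    fun w hw => ((hf1 _ (hUg w hw)).differentiableAt).hasDerivAt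
  have hdf2 : ∀ w ∈ U, HasDerivAt F2 (F3 (g w)) (g w) :=
    fun w hw => ((hf2 _ (hUg w hw)).differentiableAt).hasDerivAt
  -- Claim A
  have claimA : ∀ w ∈ U, F1 (g w) * G1 w = 1 := by
    intro w hw
    have hcomp : HasDerivAt (f ∘ g) (F1 (g w) * G1 w) w :=
      (hdf w hw).comp w (hdg w hw)
    have hid : (id : ℂ → ℂ) =ᶠ[nhds w] (f ∘ g) := by
      filter_upwards [hUopen.mem_nhds hw] with x hx
      exact (hfg x (hUq x hx)).symm
    exact (hcomp.congr_of_eventuallyEq hid).unique (hasDerivAt_id w)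
  -- Claim B
  have claimB : ∀ w ∈ U, F2 (g w) * G1 w * G1 w + F1 (g w) * G2 w = 0 := by
    intro w hw
    have h1 : HasDerivAt (fun w => F1 (g w)) (F2 (g w) * G1 w) w :=
      (hdf1 w hw).comp w (hdg w hw)
    have h2 : HasDerivAt (fun w => F1 (g w) * G1 w)
        (F2 (g w) * G1 w * G1 w + F1 (g w) * G2 w) w :=
      h1.mul (hdg1 w hw)
    have hconst : (fun _ : ℂ => (1:ℂ)) =ᶠ[nhds w] (fun w => F1 (g w) * G1 w) := by
      filter_upwards [hUopen.mem_nhds hw] with x hx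
      exact (claimA x hx).symm
    exact (h2.congr_of_eventuallyEq hconst).unique (hasDerivAt_const w 1)
  -- Claim C at 0
  have claimC : F3 (g 0) * G1 0 * (G1 0 * G1 0) + F2 (g 0) * (G2 0 * G1 0 + G1 0 * G2 0)
      + (F2 (g 0) * G1 0 * G2 0 + F1 (g 0) * G3 0) = 0 := by
    have h1 : HasDerivAt (fun w => F2 (g w)) (F3 (g 0) * G1 0) 0 :=
      (hdf2 0 h0U).comp 0 (hdg 0 h0U)
    have h2 : HasDerivAt (fun w => G1 w * G1 w) (G2 0 * G1 0 + G1 0 * G2 0) 0 :=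
      (hdg1 0 h0U).mul (hdg1 0 h0U)
    have h3 : HasDerivAt (fun w => F2 (g w) * (G1 w * G1 w))
        (F3 (g 0) * G1 0 * (G1 0 * G1 0) + F2 (g 0) * (G2 0 * G1 0 + G1 0 * G2 0)) 0 :=
      h1.mul h2
    have h4 : HasDerivAt (fun w => F1 (g w)) (F2 (g 0) * G1 0) 0 :=
      (hdf1 0 h0U).comp 0 (hdg 0 h0U)
    have h5 : HasDerivAt (fun w => F1 (g w) * G2 w)
        (F2 (g 0) * G1 0 * G2 0 + F1 (g 0) * G3 0) 0 :=
      h4.mul (hdg2 0 h0U)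
    have h6 := h3.add h5
    have hconst : (fun _ : ℂ => (0:ℂ)) =ᶠ[nhds 0]
        (fun w => F2 (g w) * (G1 w * G1 w) + F1 (g w) * G2 w) := by
      filter_upwards [hUopen.mem_nhds h0U] with x hx
      have := claimB x hx
      rw [← this]; ring
    exact (h6.congr_of_eventuallyEq hconst).unique (hasDerivAt_const 0 0)
  -- now values at 0
  have hA0 := claimA 0 h0U
  have hB0 := claimB 0 h0U
  rw [hg0] at hA0 hB0 claimC
  have hG1 : G1 0 = 1 := by rwa [hf'0, one_mul] at hA0
  rw [hf'0, hG1] at hB0 claimC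
  have e2 : iteratedDeriv 2 f 0 = F2 0 := by
    rw [show (2:ℕ) = 0+1+1 by rfl, iteratedDeriv_succ, iteratedDeriv_succ, iteratedDeriv_zero]
  have e3 : iteratedDeriv 3 f 0 = F3 0 := by
    rw [show (3:ℕ) = 0+1+1+1 by rfl, iteratedDeriv_succ, iteratedDeriv_succ,
      iteratedDeriv_succ, iteratedDeriv_zero]
  have e3g : iteratedDeriv 3 g 0 = G3 0 := by
    rw [show (3:ℕ) = 0+1+1+1 by rfl, iteratedDeriv_succ, iteratedDeriv_succ,
      iteratedDeriv_succ, iteratedDeriv_zero]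
  unfold mc
  rw [e2, e3, e3g]
  norm_num [Nat.factorial]
  linear_combination (1/6 : ℂ) * claimC - (1/2 : ℂ) * F2 0 * hB0

end Helpers


lemma coeff_ext (c d : ℕ → ℂ)
    (hsc : ∀ z : ℂ, ‖z‖ < 1 → Summable fun n => c n * z ^ n)
    (hsd : ∀ z : ℂ, ‖z‖ < 1 → Summable fun n => d n * z ^ n)
    (heq : ∀ z : ℂ, ‖z‖ < 1 → ∑' n, c n * z ^ n = ∑' n, d n * z ^ n) :
    ∀ n, c n = d n := by
  intro n
  have key := coeff_eq_zero (fun n => c n - d n) ?_ ?_ n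
  · linear_combination key
  · intro z hz
    apply ((hsc z hz).sub (hsd z hz)).congr
    intro k; ring
  · intro z hz _
    have := Summable.tsum_sub (hsc z hz) (hsd z hz)
    rw [heq z hz, sub_self] at this
    rw [← this]
    congr 1; funext k; ring

/-- main coefficient bound extracted from membership in `P_m(β)` of `brFun f k`. -/
lemma brCoeff_bound (M β : ℝ) (hβ1 : β < 1) (f k : ℂ → ℂ)
    (hsum : ∀ z ∈ unitDisk, Summable fun n : ℕ => brCoeff f k n * z ^ n)
    (hmem : MemPmBeta M β (brFun f k)) :
    ∀ n : ℕ, ‖brCoeff f k (n + 1)‖ ≤ M * (1 - β) := by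
  obtain ⟨C, hC0, hCb, hCs⟩ := memPmBeta_coeff M β (brFun f k) hmem
  have hext : ∀ n, brCoeff f k n = C n := by
    apply coeff_ext
    · intro z hz; exact hsum z (mem_unitDisk.mpr hz)
    · intro z hz; exact (hCs z (mem_unitDisk.mpr hz)).1
    · intro z hz
      have := (hCs z (mem_unitDisk.mpr hz)).2
      rw [← this]; rfl
  intro n
  rw [hext (n + 1)]
  have := hCb n
  rwa [abs_of_pos (by linarith : (0:ℝ) < 1 - β)] at this

/-- Theorem 2.1, bound for `|a₂|`. -/
theorem BR_a2_bound (m β : ℝ) (hm : 2 ≤ m) (hβ0 : 0 ≤ β) (hβ1 : β < 1)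
    (k kinv f g : ℂ → ℂ) (hk : BiUnivalentPair k kinv)
    (hk2 : mc k 2 ≠ 0) (hk3 : mc k 3 ≠ 0)
    (hf : MemBR m β k f g) :
    ‖mc f 2‖ ≤
      min (Real.sqrt (m * (1 - β) / ‖mc k 3‖))
        (m * (1 - β) / ‖mc k 2‖) := by
  obtain ⟨hpair, hsf, hsg, hmf, hmg⟩ := hf
  have hbf := brCoeff_bound m β hβ1 f k hsf hmf
  have hbg := brCoeff_bound m β hβ1 g k hsg hmg
  have h1 : ‖mc f 2 * mc k 2‖ ≤ m * (1 - β) := by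
    have := hbf 0
    rwa [show brCoeff f k (0 + 1) = mc f 2 * mc k 2 from rfl] at this
  have h2 : ‖mc f 3 * mc k 3‖ ≤ m * (1 - β) := by
    have := hbf 1
    rwa [show brCoeff f k (1 + 1) = mc f 3 * mc k 3 from rfl] at this
  have h3 : ‖mc g 3 * mc k 3‖ ≤ m * (1 - β) := by
    have := hbg 1
    rwa [show brCoeff g k (1 + 1) = mc g 3 * mc k 3 from rfl] at this
  have hsum3 : mc f 3 + mc g 3 = 2 * (mc f 2) ^ 2 := inverse_coeffs f g hpair
  have h4 : ‖(2 : ℂ) * (mc f 2) ^ 2 * mc k 3‖ ≤ 2 * (m * (1 - β)) := by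
    calc ‖(2 : ℂ) * (mc f 2) ^ 2 * mc k 3‖
        = ‖mc f 3 * mc k 3 + mc g 3 * mc k 3‖ := by
          congr 1
          linear_combination (mc k 3) * hsum3.symm
      _ ≤ ‖mc f 3 * mc k 3‖ + ‖mc g 3 * mc k 3‖ := norm_add_le _ _
      _ ≤ 2 * (m * (1 - β)) := by linarith
  have hk3' : 0 < ‖mc k 3‖ := norm_pos_iff.mpr hk3
  have hk2' : 0 < ‖mc k 2‖ := norm_pos_iff.mpr hk2
  apply le_min
  · have h5 : (‖mc f 2‖) ^ 2 ≤ m * (1 - β) / ‖mc k 3‖ := by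
      rw [le_div_iff₀ hk3']
      have he : ‖(2 : ℂ) * (mc f 2) ^ 2 * mc k 3‖
          = 2 * (‖mc f 2‖) ^ 2 * ‖mc k 3‖ := by
        rw [norm_mul, norm_mul, norm_pow]
        norm_num
      rw [he] at h4
      linarith
    calc ‖mc f 2‖
        = Real.sqrt ((‖mc f 2‖) ^ 2) :=
          (Real.sqrt_sq (norm_nonneg _)).symm
      _ ≤ Real.sqrt (m * (1 - β) / ‖mc k 3‖) := Real.sqrt_le_sqrt h5
  · rw [le_div_iff₀ hk2']
    have he : ‖mc f 2 * mc k 2‖ = ‖mc f 2‖ * ‖mc k 2‖ := by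
      rw [norm_mul]
    linarith [h1, he ▸ h1]
end
end

section
/- Let m ≥ 2, 0 ≤ β < 1, let k(z) = z + ∑_{n≥2} k_n z^n be bi-univalent with k₂ ≠ 0 and k₃ ≠ 0, and let f(z) = z + ∑_{n≥2} a_n z^n belong to the class BR^k(m; β). Then |2a₂² − a₃| ≤ m(1−β)/|k₃|. -/
open MeasureTheory Set Metric Complex

noncomputable section

open scoped NNReal ENNReal in
lemma norm_exp_ti (t : ℝ) : ‖Complex.exp (t * Complex.I)‖ = 1 := by
  rw [Complex.norm_exp]
  simp

lemma norm_J_le (μ : Measure ℝ) [IsFiniteMeasure μ] (n : ℕ) :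
    ‖∫ t in Set.Icc 0 (2*Real.pi), Complex.exp (t*Complex.I) ^ n ∂μ‖
      ≤ (μ (Set.Icc 0 (2*Real.pi))).toReal := by
  calc ‖∫ t in Set.Icc 0 (2*Real.pi), Complex.exp (t*Complex.I) ^ n ∂μ‖
      ≤ ∫ t in Set.Icc 0 (2*Real.pi), ‖Complex.exp (t*Complex.I) ^ n‖ ∂μ :=
        norm_integral_le_integral_norm _
    _ = ∫ _t in Set.Icc 0 (2*Real.pi), (1:ℝ) ∂μ := by
        apply integral_congr_ae
        filter_upwards with t
        rw [norm_pow, norm_exp_ti, one_pow]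
    _ = (μ (Set.Icc 0 (2*Real.pi))).toReal := by
        simp [Measure.restrict_apply_univ, measureReal_def]

open scoped NNReal ENNReal in
lemma kernel_int (μ : Measure ℝ) [IsFiniteMeasure μ] {z : ℂ} (hz : ‖z‖ < 1) :
    ∫ t in Set.Icc 0 (2*Real.pi), pmKernel z t ∂μ
      = 2 * ∑' n : ℕ, ((-z)^n * ∫ t in Set.Icc 0 (2*Real.pi), Complex.exp (t*Complex.I) ^ n ∂μ)
        - ((μ (Set.Icc 0 (2*Real.pi))).toReal : ℂ) := by
  have hnorm : ∀ t : ℝ, ‖z * Complex.exp (t*Complex.I)‖ = ‖z‖ := fun t => by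
    rw [norm_mul, norm_exp_ti, mul_one]
  have h1u : ∀ t : ℝ, (1:ℂ) + z * Complex.exp (t*Complex.I) ≠ 0 := by
    intro t h
    have he : z * Complex.exp (t*Complex.I) = -1 := by linear_combination h
    have h1 := hnorm t
    rw [he, norm_neg, norm_one] at h1
    rw [← h1] at hz
    norm_num at hz
  have hker : ∀ t : ℝ, pmKernel z t = 2 * (1 + z * Complex.exp (t*Complex.I))⁻¹ - 1 := by
    intro t
    have hu := h1u t
    rw [pmKernel, div_eq_iff hu]
    field_simp
    ring
  have hcont : Continuous fun t : ℝ => (1 + z * Complex.exp (t*Complex.I))⁻¹ := by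
    apply Continuous.inv₀
    · continuity
    · exact h1u
  have hGbound : ∀ t : ℝ, ‖(2:ℂ) * (1 + z * Complex.exp (t*Complex.I))⁻¹‖ ≤ 2 * (1 - ‖z‖)⁻¹ := by
    intro t
    have h1 : 1 - ‖z‖ ≤ ‖1 + z * Complex.exp (t*Complex.I)‖ := by
      have h := norm_add_le (1 + z * Complex.exp (t*Complex.I)) (-(z * Complex.exp (t*Complex.I)))
      have e2 : (1 + z * Complex.exp (t*Complex.I)) + (-(z * Complex.exp (t*Complex.I))) = 1 := by
        ring
      rw [e2, norm_one, norm_neg, hnorm] at h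
      linarith
    have hpos : (0:ℝ) < 1 - ‖z‖ := by linarith
    have h3 : ‖1 + z * Complex.exp (t*Complex.I)‖⁻¹ ≤ (1 - ‖z‖)⁻¹ := inv_anti₀ hpos h1
    have h2 : ‖(2:ℂ)‖ = 2 := by simp
    rw [norm_mul, norm_inv, h2]
    exact mul_le_mul_of_nonneg_left h3 (by norm_num)
  have hGint : Integrable (fun t : ℝ => (2:ℂ) * (1 + z * Complex.exp (t*Complex.I))⁻¹)
      (μ.restrict (Set.Icc 0 (2*Real.pi))) := by
    apply Integrable.mono' (integrable_const (2 * (1 - ‖z‖)⁻¹))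
      ((continuous_const.mul hcont).aestronglyMeasurable)
    filter_upwards with t
    exact hGbound t
  have step1 : ∫ t in Set.Icc 0 (2*Real.pi), pmKernel z t ∂μ
      = (∫ t in Set.Icc 0 (2*Real.pi), (2:ℂ) * (1 + z * Complex.exp (t*Complex.I))⁻¹ ∂μ)
        - ((μ (Set.Icc 0 (2*Real.pi))).toReal : ℂ) := by
    rw [show (fun t : ℝ => pmKernel z t) = fun t : ℝ =>
        (2:ℂ) * (1 + z * Complex.exp (t*Complex.I))⁻¹ - 1 from funext hker]
    rw [integral_sub hGint (integrable_const 1)]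
    simp [Measure.restrict_apply_univ, measureReal_def]
  rw [step1]
  congr 1
  -- expand the inverse as a geometric series and swap
  have hgeo : ∀ t : ℝ, (2:ℂ) * (1 + z * Complex.exp (t*Complex.I))⁻¹
      = ∑' n : ℕ, 2 * (-(z * Complex.exp (t*Complex.I)))^n := by
    intro t
    rw [tsum_mul_left, tsum_geometric_of_norm_lt_one (by rw [norm_neg, hnorm]; exact hz)]
    rw [sub_neg_eq_add]
  rw [show (fun t : ℝ => (2:ℂ) * (1 + z * Complex.exp (t*Complex.I))⁻¹)
      = fun t : ℝ => ∑' n : ℕ, 2 * (-(z * Complex.exp (t*Complex.I)))^n from funext hgeo]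
  rw [integral_tsum]
  · rw [← tsum_mul_left]
    congr 1
    funext n
    have : (fun t : ℝ => (2:ℂ) * (-(z * Complex.exp (t*Complex.I)))^n)
        = fun t : ℝ => (2 * (-z)^n) * Complex.exp (t*Complex.I)^n := by
      funext t
      rw [show -(z * Complex.exp (t*Complex.I)) = (-z) * Complex.exp (t*Complex.I) by ring,
        mul_pow]
      ring
    rw [this, integral_const_mul]
    ring
  · intro n
    exact (Continuous.aestronglyMeasurable (by continuity))
  · -- summability of lintegrals
    have hn : ∀ n : ℕ, ∫⁻ t in Set.Icc 0 (2*Real.pi),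
        ‖(2:ℂ) * (-(z * Complex.exp (t*Complex.I)))^n‖₊ ∂μ
        = (2 * ‖z‖₊^n : ℝ≥0) * μ (Set.Icc 0 (2*Real.pi)) := by
      intro n
      have : ∀ t : ℝ, (‖(2:ℂ) * (-(z * Complex.exp (t*Complex.I)))^n‖₊ : ℝ≥0∞)
          = ((2 * ‖z‖₊^n : ℝ≥0) : ℝ≥0∞) := by
        intro t
        congr 1
        ext
        push_cast
        rw [norm_mul, norm_pow, norm_neg, hnorm]
        norm_num
      simp_rw [this]
      rw [MeasureTheory.lintegral_const, Measure.restrict_apply_univ]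
    simp_rw [← enorm_eq_nnnorm] at hn
    simp_rw [hn]
    rw [ENNReal.tsum_mul_right]
    apply ENNReal.mul_ne_top _ (measure_ne_top μ _)
    have : ∀ n : ℕ, ((2 * ‖z‖₊^n : ℝ≥0) : ℝ≥0∞) = 2 * ((‖z‖₊ : ℝ≥0∞))^n := by
      intro n; push_cast; ring
    simp_rw [this]
    rw [ENNReal.tsum_mul_left, ENNReal.tsum_geometric]
    apply ENNReal.mul_ne_top (by norm_num)
    rw [ENNReal.inv_ne_top]
    intro h0
    rw [tsub_eq_zero_iff_le] at h0
    have : (1:ℝ≥0) ≤ ‖z‖₊ := by exact_mod_cast h0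
    have : (1:ℝ) ≤ ‖z‖ := this
    linarith
open scoped NNReal ENNReal in
open FormalMultilinearSeries in
lemma coeff_two_bound (m β : ℝ) (hβ1 : β < 1) (c : ℕ → ℂ)
    (hsum : ∀ z ∈ unitDisk, Summable fun n : ℕ => c n * z ^ n)
    (hP : MemPmBeta m β (fun z => ∑' n : ℕ, c n * z ^ n)) :
    ‖c 2‖ ≤ m * (1 - β) := by
  obtain ⟨q, ⟨hqa, hq0, μp, μn, hfp, hfn, hΔ, hTV, hrep⟩, hpq⟩ := hP
  haveI := hfp; haveI := hfn
  have hJpb : ∀ n, ‖∫ t in Set.Icc 0 (2*Real.pi), Complex.exp (t*Complex.I) ^ n ∂μp‖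
      ≤ (μp (Set.Icc 0 (2*Real.pi))).toReal := fun n => norm_J_le μp n
  have hJnb : ∀ n, ‖∫ t in Set.Icc 0 (2*Real.pi), Complex.exp (t*Complex.I) ^ n ∂μn‖
      ≤ (μn (Set.Icc 0 (2*Real.pi))).toReal := fun n => norm_J_le μn n
  set Jp : ℕ → ℂ := fun n => ∫ t in Set.Icc 0 (2*Real.pi), Complex.exp (t*Complex.I) ^ n ∂μp
    with hJpdef
  set Jn : ℕ → ℂ := fun n => ∫ t in Set.Icc 0 (2*Real.pi), Complex.exp (t*Complex.I) ^ n ∂μn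
    with hJndef
  have hΔp0 : (0:ℝ) ≤ (μp (Set.Icc 0 (2*Real.pi))).toReal := ENNReal.toReal_nonneg
  have hΔn0 : (0:ℝ) ≤ (μn (Set.Icc 0 (2*Real.pi))).toReal := ENNReal.toReal_nonneg
  set E : ℕ → ℂ := fun n =>
    (if n = 0 then (2*(β:ℂ) - 1) else 0) + ((1:ℂ) - β) * 2 * ((-1:ℂ)^n * (Jp n - Jn n))
    with hEdef
  have hβnorm : ‖(1:ℂ) - (β:ℂ)‖ = 1 - β := by
    rw [show (1:ℂ) - (β:ℂ) = ((1 - β : ℝ) : ℂ) by push_cast; ring, Complex.norm_real,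
      Real.norm_eq_abs, abs_of_pos (by linarith)]
  have hEb : ∀ n, ‖E n‖ ≤ |2*β-1| + (1-β) * 2 * ((μp (Set.Icc 0 (2*Real.pi))).toReal + (μn (Set.Icc 0 (2*Real.pi))).toReal) := by
    intro n
    refine (norm_add_le _ _).trans ?_
    gcongr
    · rcases eq_or_ne n 0 with h | h
      · have hr : (if n = 0 then (2*(β:ℂ) - 1) else 0) = 2*(β:ℂ) - 1 := if_pos h
        rw [hr, show 2*(β:ℂ) - 1 = ((2*β - 1 : ℝ) : ℂ) by push_cast; ring, Complex.norm_real,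
          Real.norm_eq_abs]
      · have hr : (if n = 0 then (2*(β:ℂ) - 1) else 0) = 0 := if_neg h
        rw [hr, norm_zero]
        exact abs_nonneg _
    · rw [norm_mul, norm_mul, norm_mul, norm_pow, norm_neg, norm_one, one_pow, one_mul,
        hβnorm]
      have h2 : ‖(2:ℂ)‖ = 2 := by simp
      rw [h2]
      have : ‖Jp n - Jn n‖ ≤ (μp (Set.Icc 0 (2*Real.pi))).toReal + (μn (Set.Icc 0 (2*Real.pi))).toReal :=
        (norm_sub_le _ _).trans (add_le_add (hJpb n) (hJnb n))
      have h1β : (0:ℝ) ≤ 1 - β := by linarith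
      calc (1-β) * 2 * ‖Jp n - Jn n‖ ≤ (1-β) * 2 * ((μp (Set.Icc 0 (2*Real.pi))).toReal + (μn (Set.Icc 0 (2*Real.pi))).toReal) := by
            apply mul_le_mul_of_nonneg_left this (by linarith)
        _ = (1-β) * 2 * ((μp (Set.Icc 0 (2*Real.pi))).toReal + (μn (Set.Icc 0 (2*Real.pi))).toReal) := rfl
  -- radius of the series with coefficients c is positive
  have hc_rad : 0 < (FormalMultilinearSeries.ofScalars ℂ c).radius := by
    have hhalf : (1/2 : ℂ) ∈ unitDisk := by
      simp only [unitDisk, Metric.mem_ball, Complex.dist_eq, sub_zero]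
      norm_num
    have hS := hsum _ hhalf
    have ht : Filter.Tendsto (fun n : ℕ => ‖c n * (1/2:ℂ)^n‖) Filter.atTop (nhds 0) := by
      have := hS.tendsto_atTop_zero.norm
      simpa using this
    obtain ⟨C, hC⟩ := ht.bddAbove_range
    have hle := FormalMultilinearSeries.le_radius_of_bound
      (FormalMultilinearSeries.ofScalars ℂ c) C (r := (1/2 : ℝ≥0)) ?_
    · exact lt_of_lt_of_le (by norm_num) hle
    · intro n
      rw [ofScalars_norm]
      calc ‖c n‖ * ((1/2:ℝ≥0):ℝ)^n = ‖c n * (1/2:ℂ)^n‖ := by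
            rw [norm_mul, norm_pow]
            norm_num
        _ ≤ C := hC (Set.mem_range_self n)
  -- radius of the series with coefficients E is positive
  have hE_rad : 0 < (FormalMultilinearSeries.ofScalars ℂ E).radius := by
    have hle := FormalMultilinearSeries.le_radius_of_bound
      (FormalMultilinearSeries.ofScalars ℂ E) (|2*β-1| + (1-β) * 2 * ((μp (Set.Icc 0 (2*Real.pi))).toReal + (μn (Set.Icc 0 (2*Real.pi))).toReal))
      (r := (1 : ℝ≥0)) ?_
    · exact lt_of_lt_of_le (by norm_num) hle
    · intro n
      rw [ofScalars_norm]
      simpa using hEb n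
  -- the two sums agree on the unit disk
  have hsum_eq : ∀ z ∈ unitDisk, (FormalMultilinearSeries.ofScalars ℂ E).sum z
      = ∑' n : ℕ, c n * z ^ n := by
    intro z hzmem
    have hz : ‖z‖ < 1 := by
      simpa only [unitDisk, Metric.mem_ball, Complex.dist_eq, sub_zero] using hzmem
    have hsp : Summable (fun n : ℕ => (-z)^n * Jp n) := by
      apply Summable.of_norm
      apply Summable.of_nonneg_of_le (fun n => norm_nonneg _) (fun n => ?_)
        ((summable_geometric_of_lt_one (norm_nonneg z) hz).mul_right ((μp (Set.Icc 0 (2*Real.pi))).toReal))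
      rw [norm_mul, norm_pow, norm_neg]
      exact mul_le_mul_of_nonneg_left (hJpb n) (pow_nonneg (norm_nonneg z) n)
    have hsn : Summable (fun n : ℕ => (-z)^n * Jn n) := by
      apply Summable.of_norm
      apply Summable.of_nonneg_of_le (fun n => norm_nonneg _) (fun n => ?_)
        ((summable_geometric_of_lt_one (norm_nonneg z) hz).mul_right ((μn (Set.Icc 0 (2*Real.pi))).toReal))
      rw [norm_mul, norm_pow, norm_neg]
      exact mul_le_mul_of_nonneg_left (hJnb n) (pow_nonneg (norm_nonneg z) n)
    have hsd : Summable (fun n : ℕ => (-z)^n * (Jp n - Jn n)) :=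
      (hsp.sub hsn).congr fun n => (mul_sub _ _ _).symm
    have hif : Summable (fun n : ℕ => (if n = 0 then (2*(β:ℂ)-1) else 0) * z ^ n) := by
      apply summable_of_ne_finset_zero (s := ({0} : Finset ℕ))
      intro n hn
      have : n ≠ 0 := by simpa using hn
      simp [this]
    have e1 : (FormalMultilinearSeries.ofScalars ℂ E).sum z = ∑' n : ℕ, E n * z ^ n :=
      tsum_congr fun n => by rw [ofScalars_apply_eq, smul_eq_mul]
    have e2 : ∀ n : ℕ, E n * z ^ n
        = (if n = 0 then (2*(β:ℂ)-1) else 0) * z ^ n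
          + ((1:ℂ)-β)*2* ((-z)^n * (Jp n - Jn n)) := by
      intro n
      have hzn : (-z)^n = (-1:ℂ)^n * z^n := by rw [← neg_one_mul, mul_pow]
      simp only [hEdef]
      rw [hzn]
      ring
    have e3 : (∑' n : ℕ, (if n = 0 then (2*(β:ℂ)-1) else 0) * z ^ n) = 2*(β:ℂ)-1 := by
      rw [tsum_eq_single 0 (fun n hn => by simp [hn])]
      simp
    have hpq' : (∑' n : ℕ, c n * z ^ n) = (β:ℂ) + (1 - (β:ℂ)) * q z := hpq z hzmem
    have hΔC : ((μp (Set.Icc 0 (2*Real.pi))).toReal : ℂ)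
        - ((μn (Set.Icc 0 (2*Real.pi))).toReal : ℂ) = 1 := by exact_mod_cast hΔ
    calc (FormalMultilinearSeries.ofScalars ℂ E).sum z
        = ∑' n : ℕ, E n * z ^ n := e1
      _ = ∑' n : ℕ, ((if n = 0 then (2*(β:ℂ)-1) else 0) * z ^ n
            + ((1:ℂ)-β)*2* ((-z)^n * (Jp n - Jn n))) := tsum_congr e2
      _ = (2*(β:ℂ)-1) + ((1:ℂ)-β)*2*
            ((∑' n : ℕ, (-z)^n * Jp n) - ∑' n : ℕ, (-z)^n * Jn n) := by
          rw [Summable.tsum_add hif (hsd.mul_left _), tsum_mul_left, e3, ← Summable.tsum_sub hsp hsn,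
            ← tsum_congr (fun n => mul_sub ((-z)^n) (Jp n) (Jn n))]
      _ = ∑' n : ℕ, c n * z ^ n := by
          rw [hpq', hrep z hzmem, kernel_int μp hz, kernel_int μn hz]
          linear_combination ((1:ℂ) - (β:ℂ)) * hΔC
  -- identify the two coefficient sequences
  have hfun1 : HasFPowerSeriesAt (fun z => ∑' n : ℕ, c n * z ^ n)
      (FormalMultilinearSeries.ofScalars ℂ c) 0 := by
    have h := ((FormalMultilinearSeries.ofScalars ℂ c).hasFPowerSeriesOnBall
      hc_rad).hasFPowerSeriesAt
    have heq : (FormalMultilinearSeries.ofScalars ℂ c).sum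
        = fun z => ∑' n : ℕ, c n * z ^ n := by
      funext z
      exact tsum_congr fun n => by rw [ofScalars_apply_eq, smul_eq_mul]
    rwa [heq] at h
  have hfun2 : HasFPowerSeriesAt (fun z => ∑' n : ℕ, c n * z ^ n)
      (FormalMultilinearSeries.ofScalars ℂ E) 0 := by
    have h := ((FormalMultilinearSeries.ofScalars ℂ E).hasFPowerSeriesOnBall
      hE_rad).hasFPowerSeriesAt
    apply h.congr
    have hmem : unitDisk ∈ nhds (0:ℂ) := by
      apply IsOpen.mem_nhds
      · unfold unitDisk; exact isOpen_ball
      · simp [unitDisk]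
    filter_upwards [hmem] with z hzm
    exact hsum_eq z hzm
  have hcE : c = E := ofScalars_series_injective ℂ ℂ
    (hfun1.eq_formalMultilinearSeries hfun2)
  -- conclude
  have hE2 : E 2 = ((1:ℂ)-β)*2*(Jp 2 - Jn 2) := by
    simp only [hEdef]
    norm_num
  rw [hcE, hE2]
  rw [norm_mul, norm_mul, hβnorm]
  have h2 : ‖(2:ℂ)‖ = 2 := by simp
  rw [h2]
  have hd : ‖Jp 2 - Jn 2‖ ≤ (μp (Set.Icc 0 (2*Real.pi))).toReal + (μn (Set.Icc 0 (2*Real.pi))).toReal :=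
    (norm_sub_le _ _).trans (add_le_add (hJpb 2) (hJnb 2))
  have h1β : (0:ℝ) ≤ 1 - β := by linarith
  calc (1-β) * 2 * ‖Jp 2 - Jn 2‖ ≤ (1-β) * 2 * (m/2) := by
        apply mul_le_mul_of_nonneg_left (hd.trans hTV) (by linarith)
    _ = m * (1 - β) := by ring
open Filter in
lemma mcg3_eq (f g : ℂ → ℂ) (h : BiUnivalentPair f g) :
    mc g 3 = 2 * mc f 2 ^ 2 - mc f 3 := by
  obtain ⟨hfa, hf0, hf1, -, hga, -, hg0, hfg⟩ := h
  have hopen : IsOpen unitDisk := by unfold unitDisk; exact isOpen_ball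
  have h0disk : (0:ℂ) ∈ unitDisk := by simp [unitDisk]
  have hgd : ∀ᶠ w in nhds (0:ℂ), g w ∈ unitDisk := by
    have hc : ContinuousAt g 0 := (hga 0 h0disk).continuousAt
    exact hc.preimage_mem_nhds (by rw [hg0]; exact hopen.mem_nhds h0disk)
  have hwd : ∀ᶠ w in nhds (0:ℂ), w ∈ unitDisk := hopen.mem_nhds h0disk
  have hwb : ∀ᶠ w in nhds (0:ℂ), ‖w‖ < 1/4 := by
    have hmem : Metric.ball (0:ℂ) (1/4) ∈ nhds (0:ℂ) := Metric.ball_mem_nhds _ (by norm_num)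
    filter_upwards [hmem] with w hw
    simpa [Complex.dist_eq] using hw
  have hfa' : AnalyticOnNhd ℂ (deriv f) unitDisk := hfa.deriv
  have hfa'' : AnalyticOnNhd ℂ (deriv (deriv f)) unitDisk := hfa'.deriv
  have hga' : AnalyticOnNhd ℂ (deriv g) unitDisk := hga.deriv
  have hga'' : AnalyticOnNhd ℂ (deriv (deriv g)) unitDisk := hga'.deriv
  have h0 : (fun w => f (g w)) =ᶠ[nhds (0:ℂ)] (fun w => w) := hwb.mono fun w hw => hfg w hw
  -- first derivative identity
  have h1 : ∀ᶠ w in nhds (0:ℂ), deriv f (g w) * deriv g w = 1 := by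
    filter_upwards [h0.deriv, hgd, hwd] with w hd h2 h3
    have hcomp : deriv (fun w => f (g w)) w = deriv f (g w) * deriv g w :=
      deriv_comp w (hfa _ h2).differentiableAt (hga _ h3).differentiableAt
    rw [hcomp] at hd
    simpa using hd
  -- second derivative identity
  have h2 : ∀ᶠ w in nhds (0:ℂ),
      deriv (deriv f) (g w) * deriv g w * deriv g w + deriv f (g w) * deriv (deriv g) w = 0 := by
    have h1' : (fun w => deriv f (g w) * deriv g w) =ᶠ[nhds (0:ℂ)] (fun _ => (1:ℂ)) := h1
    filter_upwards [h1'.deriv, hgd, hwd] with w hd h2 h3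
    have d1 : DifferentiableAt ℂ (fun w => deriv f (g w)) w :=
      ((hfa' _ h2).differentiableAt.comp w (hga _ h3).differentiableAt)
    have d2 : DifferentiableAt ℂ (deriv g) w := (hga' _ h3).differentiableAt
    have e1 : deriv (fun w => deriv f (g w)) w = deriv (deriv f) (g w) * deriv g w :=
      deriv_comp w (hfa' _ h2).differentiableAt (hga _ h3).differentiableAt
    rw [deriv_fun_mul d1 d2, e1] at hd
    simpa using hd
  -- third derivative identity at 0
  have hg0d : g 0 ∈ unitDisk := by rw [hg0]; exact h0disk
  have dg : DifferentiableAt ℂ g 0 := (hga _ h0disk).differentiableAt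
  have dg1 : DifferentiableAt ℂ (deriv g) 0 := (hga' _ h0disk).differentiableAt
  have dg2 : DifferentiableAt ℂ (deriv (deriv g)) 0 := (hga'' _ h0disk).differentiableAt
  have dF1g : DifferentiableAt ℂ (fun w => deriv f (g w)) 0 :=
    (hfa' _ hg0d).differentiableAt.comp 0 dg
  have dF2g : DifferentiableAt ℂ (fun w => deriv (deriv f) (g w)) 0 :=
    (hfa'' _ hg0d).differentiableAt.comp 0 dg
  have h2' : (fun w => deriv (deriv f) (g w) * deriv g w * deriv g w
      + deriv f (g w) * deriv (deriv g) w) =ᶠ[nhds (0:ℂ)] (fun _ => (0:ℂ)) := h2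
  have h3 := h2'.deriv_eq
  rw [deriv_const] at h3
  have eF2g : deriv (fun w => deriv (deriv f) (g w)) 0
      = deriv (deriv (deriv f)) (g 0) * deriv g 0 :=
    deriv_comp 0 (hfa'' _ hg0d).differentiableAt dg
  have eF1g : deriv (fun w => deriv f (g w)) 0 = deriv (deriv f) (g 0) * deriv g 0 :=
    deriv_comp 0 (hfa' _ hg0d).differentiableAt dg
  rw [deriv_fun_add (show DifferentiableAt ℂ (fun w => deriv (deriv f) (g w) * deriv g w * deriv g w) 0
        from (dF2g.mul dg1).mul dg1)
        (show DifferentiableAt ℂ (fun w => deriv f (g w) * deriv (deriv g) w) 0 from dF1g.mul dg2),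
      deriv_fun_mul (show DifferentiableAt ℂ (fun w => deriv (deriv f) (g w) * deriv g w) 0
        from dF2g.mul dg1) dg1, deriv_fun_mul dF2g dg1,
      deriv_fun_mul dF1g dg2, eF2g, eF1g] at h3
  -- now pure algebra
  have E1 : deriv f (g 0) * deriv g 0 = 1 := h1.self_of_nhds
  have E2 : deriv (deriv f) (g 0) * deriv g 0 * deriv g 0
      + deriv f (g 0) * deriv (deriv g) 0 = 0 := h2.self_of_nhds
  rw [hg0] at E1 E2 h3
  rw [hf1] at E1 E2 h3
  have hd1 : deriv g 0 = 1 := by rw [one_mul] at E1; exact E1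
  rw [hd1] at E2 h3
  have hd2 : deriv (deriv g) 0 = - deriv (deriv f) 0 := by linear_combination E2
  rw [hd2] at h3
  -- express mc in terms of derivs
  have hitf : iteratedDeriv 2 f = deriv (deriv f) := by
    rw [iteratedDeriv_succ, iteratedDeriv_one]
  have hitf3 : iteratedDeriv 3 f = deriv (deriv (deriv f)) := by
    rw [iteratedDeriv_succ, iteratedDeriv_succ, iteratedDeriv_one]
  have hitg3 : iteratedDeriv 3 g = deriv (deriv (deriv g)) := by
    rw [iteratedDeriv_succ, iteratedDeriv_succ, iteratedDeriv_one]
  simp only [mc, hitf, hitf3, hitg3]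
  norm_num [Nat.factorial]
  linear_combination h3 / 6

/-- Theorem 2.1, bound for `|2a₂² - a₃|`. -/
theorem BR_2a2sq_sub_a3_bound (m β : ℝ) (hm : 2 ≤ m) (hβ0 : 0 ≤ β) (hβ1 : β < 1)
    (k kinv f g : ℂ → ℂ) (hk : BiUnivalentPair k kinv)
    (hk2 : mc k 2 ≠ 0) (hk3 : mc k 3 ≠ 0)
    (hf : MemBR m β k f g) :
    ‖2 * mc f 2 ^ 2 - mc f 3‖ ≤ m * (1 - β) / ‖mc k 3‖ := by
  obtain ⟨hpair, hsumf, hsumg, hPf, hPg⟩ := hf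
  have hg3 : mc g 3 = 2 * mc f 2 ^ 2 - mc f 3 := mcg3_eq f g hpair
  have hb : ‖brCoeff g k 2‖ ≤ m * (1 - β) :=
    coeff_two_bound m β hβ1 (brCoeff g k) hsumg hPg
  have hco : brCoeff g k 2 = mc g 3 * mc k 3 := by simp [brCoeff]
  rw [hco, hg3] at hb
  rw [norm_mul] at hb
  have hkpos : 0 < ‖mc k 3‖ := norm_pos_iff.mpr hk3
  rw [le_div_iff₀ hkpos]
  exact hb
end
end

section
/- Let m ≥ 2 and let f(z) = z + ∑_{n≥2} a_n z^n be bi-univalent with inverse g = f⁻¹. If the function z ↦ f(z)/z (extended by 1 at z = 0) belongs to the class P_m and the function w ↦ g(w)/w (extended by 1 at w = 0) belongs to the class P_m, then |a₂| ≤ √m, |a₃| ≤ m, and |2a₂² − a₃| ≤ m. -/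
open MeasureTheory Set Metric Complex

noncomputable section

/-! ### Auxiliary lemmas -/

lemma kernel_hasSum_s7 (z : ℂ) (hz : ‖z‖ < 1) (t : ℝ) :
    HasSum (fun k : ℕ => if k = 0 then (1:ℂ) else 2 * (-(z * Complex.exp (t * Complex.I)))^k)
      (pmKernel z t) := by
  set w := z * Complex.exp (t * Complex.I) with hw
  have hnw : ‖w‖ < 1 := by
    rw [hw]
    simp only [norm_mul]
    rw [Complex.norm_exp]
    simp [Complex.mul_I_re]
    exact hz
  have hne : (1 : ℂ) + w ≠ 0 := by
    intro h
    have : w = -1 := by linear_combination h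
    rw [this] at hnw; simp at hnw
  have hgeo : HasSum (fun k : ℕ => (-w)^k) (1 - (-w))⁻¹ :=
    hasSum_geometric_of_norm_lt_one (by simpa using hnw)
  have h2 : HasSum (fun k : ℕ => (-2*w) * (-w)^k) ((-2*w) * (1 - (-w))⁻¹) := hgeo.mul_left _
  rw [← hasSum_nat_add_iff' 1]
  simp only [Finset.range_one, Finset.sum_singleton, if_pos rfl]
  have hval : pmKernel z t - 1 = (-2*w) * (1 - (-w))⁻¹ := by
    rw [pmKernel, ← hw, sub_neg_eq_add]
    field_simp
    ring
  rw [if_pos trivial, hval]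
  convert h2 using 2 with k
  · rfl
  rw [if_neg (Nat.succ_ne_zero k)]
  ring

lemma integral_kernel_hasSum (z : ℂ) (hz : ‖z‖ < 1) (μ : Measure ℝ)
    [IsFiniteMeasure μ] (s : Set ℝ) :
    HasSum (fun k : ℕ => ∫ t in s, (if k = 0 then (1:ℂ)
        else 2 * (-(z * Complex.exp (t * Complex.I)))^k) ∂μ)
      (∫ t in s, pmKernel z t ∂μ) := by
  set F : ℕ → ℝ → ℂ := fun k t => if k = 0 then (1:ℂ)
        else 2 * (-(z * Complex.exp (t * Complex.I)))^k with hF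
  have habs : ∀ t : ℝ, ‖z * Complex.exp (t * Complex.I)‖ = ‖z‖ := by
    intro t
    rw [norm_mul, Complex.norm_exp]
    simp [Complex.mul_I_re]
  have hnorm : ∀ k t, ‖F k t‖ = if k = 0 then 1 else 2 * ‖z‖^k := by
    intro k t
    rcases eq_or_ne k 0 with h | h
    · simp [hF, h]
    · simp only [hF, if_neg h]
      rw [norm_mul, norm_pow, norm_neg, habs t]
      simp
  have hcont : ∀ k, Continuous (F k) := by
    intro k
    rcases eq_or_ne k 0 with h | h
    · simp only [hF, h, if_pos rfl]; exact continuous_const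
    · simp only [hF, if_neg h]
      fun_prop
  have hint : ∀ k, Integrable (F k) (μ.restrict s) := by
    intro k
    refine ⟨(hcont k).aestronglyMeasurable, ?_⟩
    apply MeasureTheory.HasFiniteIntegral.of_bounded (C := 2)
    filter_upwards with t
    rw [hnorm k t]
    rcases eq_or_ne k 0 with h | h
    · simp [h]
    · rw [if_neg h]
      have : ‖z‖^k ≤ 1 := pow_le_one₀ (norm_nonneg z) hz.le
      nlinarith [norm_nonneg z]
  have hsum : Summable fun k => ∫ t in s, ‖F k t‖ ∂μ := by
    have hb : ∀ k, ∫ t in s, ‖F k t‖ ∂μ ≤ 2 * ‖z‖^k * (μ s).toReal := by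
      intro k
      have : ∫ t in s, ‖F k t‖ ∂μ = (if k = 0 then 1 else 2 * ‖z‖^k) * (μ s).toReal := by
        rw [MeasureTheory.integral_congr_ae (g := fun _ => if k = 0 then (1:ℝ)
            else 2 * ‖z‖^k) (by filter_upwards with t; rw [hnorm k t])]
        rw [MeasureTheory.integral_const]
        simp [Measure.restrict_apply_univ, mul_comm, measureReal_def]
      rw [this]
      rcases eq_or_ne k 0 with h | h
      · simp [h]
        nlinarith [ENNReal.toReal_nonneg (a := μ s)]
      · rw [if_neg h]
    apply Summable.of_nonneg_of_le (fun k => ?_) hb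
    · apply Summable.mul_right
      exact (summable_geometric_of_lt_one (norm_nonneg z) hz).mul_left 2
    · exact integral_nonneg fun t => norm_nonneg _
  have := MeasureTheory.hasSum_integral_of_summable_integral_norm hint hsum
  convert this using 1
  · rfl
  apply MeasureTheory.integral_congr_ae
  filter_upwards with t
  exact ((kernel_hasSum_s7 z hz t).tsum_eq).symm

lemma memPm_coeff_s7 (m : ℝ) (hm : 2 ≤ m) (p : ℂ → ℂ) (hp : MemPm m p) (n : ℕ) :
    ‖mc p n‖ ≤ m := by
  obtain ⟨hpa, hp0, μp, μn, hfp, hfn, hone, htot, hrep⟩ := hp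
  set s : Set ℝ := Set.Icc 0 (2 * Real.pi) with hsdef
  set c : ℕ → ℂ := fun k => if k = 0 then 1 else
    2 * (-1)^k * ((∫ t in s, Complex.exp ((k * t : ℝ) * Complex.I) ∂μp) -
                  (∫ t in s, Complex.exp ((k * t : ℝ) * Complex.I) ∂μn)) with hc
  have hterm : ∀ (μ : Measure ℝ) (k : ℕ) (z : ℂ), k ≠ 0 →
      ∫ t in s, (if k = 0 then (1:ℂ) else 2 * (-(z * Complex.exp (t * Complex.I)))^k) ∂μ
      = 2 * (-z)^k * ∫ t in s, Complex.exp ((k * t : ℝ) * Complex.I) ∂μ := by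
    intro μ k z hk
    simp only [if_neg hk]
    rw [← MeasureTheory.integral_const_mul]
    apply MeasureTheory.integral_congr_ae
    filter_upwards with t
    have h1 : Complex.exp (t * Complex.I) ^ k = Complex.exp ((k * t : ℝ) * Complex.I) := by
      rw [← Complex.exp_nat_mul]
      push_cast
      ring_nf
    rw [neg_mul_eq_neg_mul, mul_pow, h1]
    ring
  have habs1 : ∀ (μ : Measure ℝ) [IsFiniteMeasure μ] (k : ℕ),
      ‖∫ t in s, Complex.exp ((k * t : ℝ) * Complex.I) ∂μ‖ ≤ (μ s).toReal := by
    intro μ _ k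
    calc ‖∫ t in s, Complex.exp ((k * t : ℝ) * Complex.I) ∂μ‖
        ≤ ∫ t in s, ‖Complex.exp ((k * t : ℝ) * Complex.I)‖ ∂μ :=
          MeasureTheory.norm_integral_le_integral_norm _
      _ = ∫ t in s, (1:ℝ) ∂μ := by
          apply MeasureTheory.integral_congr_ae
          filter_upwards with t
          rw [Complex.norm_exp]
          simp [Complex.mul_I_re]
      _ = (μ s).toReal := by
          rw [MeasureTheory.integral_const]
          rw [measureReal_restrict_apply_univ]
          simp [measureReal_def]
  have hcb : ∀ k, ‖c k‖ ≤ m := by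
    intro k
    rcases eq_or_ne k 0 with h | h
    · simp [hc, h]; linarith
    · rw [hc]
      simp only [if_neg h]
      rw [norm_mul, norm_mul]
      have h2 : ‖(-1:ℂ)^k‖ = 1 := by
        rw [norm_pow]; simp
      rw [h2]
      have := habs1 μp k
      have := habs1 μn k
      have h3 : ‖(∫ t in s, Complex.exp ((k * t : ℝ) * Complex.I) ∂μp) -
          (∫ t in s, Complex.exp ((k * t : ℝ) * Complex.I) ∂μn)‖ ≤
          (μp s).toReal + (μn s).toReal := by
        apply le_trans (norm_sub_le _ _)
        gcongr
      have h4 : ‖(2:ℂ)‖ = 2 := by simp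
      rw [h4]
      calc 2 * 1 * ‖_‖ ≤ 2 * 1 * ((μp s).toReal + (μn s).toReal) := by gcongr
        _ ≤ 2 * (m / 2) := by rw [hsdef]; linarith
        _ = m := by ring
  have hps : HasFPowerSeriesOnBall p (FormalMultilinearSeries.ofScalars ℂ c) 0 1 := by
    refine ⟨?_, one_pos, ?_⟩
    · apply FormalMultilinearSeries.le_radius_of_bound _ m
      intro k
      rw [FormalMultilinearSeries.ofScalars_norm]
      simp only [ENNReal.coe_one, NNReal.coe_one, one_pow, mul_one]
      exact hcb k
    · intro y hy
      rw [EMetric.mem_ball, edist_zero_right] at hy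
      have hy1 : ‖y‖ < 1 := by
        simpa [← ofReal_norm] using hy
      simp only [FormalMultilinearSeries.ofScalars_apply_eq, smul_eq_mul, zero_add]
      have hp1 := integral_kernel_hasSum y hy1 μp s
      have hp2 := integral_kernel_hasSum y hy1 μn s
      have hsub := hp1.sub hp2
      rw [← hrep y (by simpa [unitDisk, Metric.mem_ball] using hy1)] at hsub
      convert hsub using 2 with k
      rcases eq_or_ne k 0 with h | h
      · simp only [h, hc, if_pos rfl, pow_zero, mul_one, if_true]
        rw [MeasureTheory.integral_const, MeasureTheory.integral_const,
            measureReal_restrict_apply_univ, measureReal_restrict_apply_univ, Complex.real_smul,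
            Complex.real_smul, mul_one, mul_one, ← Complex.ofReal_sub]
        exact_mod_cast hone.symm
      · rw [hterm μp k y h, hterm μn k y h, hc]
        simp only [if_neg h]
        ring
  have hfact := hps.factorial_smul (y := (1:ℂ)) n
  rw [FormalMultilinearSeries.ofScalars_apply_eq] at hfact
  have hiter : iteratedDeriv n p 0 = (n.factorial : ℂ) * c n := by
    rw [iteratedDeriv_eq_iteratedFDeriv, ← hfact]
    simp [nsmul_eq_mul]
  have hne : (n.factorial : ℂ) ≠ 0 := by exact_mod_cast n.factorial_ne_zero
  rw [mc, hiter, mul_comm, mul_div_assoc, div_self hne, mul_one]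
  exact hcb n

lemma shift_derivs (p F : ℂ → ℂ) (hp : AnalyticOnNhd ℂ p unitDisk)
    (hF : ∀ z, F z = z * p z) :
    deriv (deriv F) 0 = 2 * deriv p 0 ∧
    deriv (deriv (deriv F)) 0 = 3 * deriv (deriv p) 0 := by
  have hopen : IsOpen unitDisk := Metric.isOpen_ball
  have h0 : (0:ℂ) ∈ unitDisk := by simp [unitDisk]
  have hmem : ∀ᶠ x in nhds (0:ℂ), x ∈ unitDisk := hopen.mem_nhds h0
  have hp1 : AnalyticOnNhd ℂ (deriv p) unitDisk := hp.deriv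
  have hp2 : AnalyticOnNhd ℂ (deriv (deriv p)) unitDisk := hp1.deriv
  have hFe : F = fun z => z * p z := funext hF
  have E1 : deriv F =ᶠ[nhds 0] fun x => p x + x * deriv p x := by
    filter_upwards [hmem] with x hx
    rw [hFe, deriv_fun_mul differentiableAt_fun_id ((hp x hx).differentiableAt)]
    simp
  have E2' : (fun x => deriv (fun y => p y + y * deriv p y) x) =ᶠ[nhds (0:ℂ)]
      fun x => 2 * deriv p x + x * deriv (deriv p) x := by
    filter_upwards [hmem] with x hx
    rw [deriv_fun_add ((hp x hx).differentiableAt)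
        (differentiableAt_fun_id.fun_mul ((hp1 x hx).differentiableAt)),
      deriv_fun_mul differentiableAt_fun_id ((hp1 x hx).differentiableAt)]
    simp
    ring
  have E2 : deriv (deriv F) =ᶠ[nhds 0] fun x => 2 * deriv p x + x * deriv (deriv p) x :=
    E1.deriv.trans E2'
  constructor
  · have := E2.self_of_nhds
    simpa using this
  · have E3 := E2.deriv.self_of_nhds
    rw [E3, deriv_fun_add (((hp1 0 h0).differentiableAt).const_mul 2)
        (differentiableAt_fun_id.fun_mul ((hp2 0 h0).differentiableAt)),
      deriv_const_mul 2 ((hp1 0 h0).differentiableAt),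
      deriv_fun_mul differentiableAt_fun_id ((hp2 0 h0).differentiableAt)]
    simp
    ring

lemma inv_derivs (f g : ℂ → ℂ)
    (hfa : AnalyticOnNhd ℂ f unitDisk) (hf1 : deriv f 0 = 1)
    (hga : AnalyticOnNhd ℂ g unitDisk) (hg0 : g 0 = 0)
    (hinv : ∀ w : ℂ, ‖w‖ < 1/4 → f (g w) = w) :
    deriv g 0 = 1 ∧ deriv (deriv g) 0 = - deriv (deriv f) 0 ∧
    deriv (deriv (deriv g)) 0 =
      - deriv (deriv (deriv f)) 0 + 3 * (deriv (deriv f) 0)^2 := by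
  have hopen : IsOpen unitDisk := Metric.isOpen_ball
  have h0 : (0:ℂ) ∈ unitDisk := by simp [unitDisk]
  have hmem : ∀ᶠ x in nhds (0:ℂ), x ∈ unitDisk := hopen.mem_nhds h0
  have hgmem : ∀ᶠ x in nhds (0:ℂ), g x ∈ unitDisk := by
    have hc : ContinuousAt g 0 := (hga 0 h0).differentiableAt.continuousAt
    have : Filter.Tendsto g (nhds 0) (nhds 0) := by
      simpa [ContinuousAt, hg0] using hc
    exact this (hopen.mem_nhds h0)
  have hid : (fun x => f (g x)) =ᶠ[nhds (0:ℂ)] id := by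
    have hball : Metric.ball (0:ℂ) (1/4) ∈ nhds (0:ℂ) := Metric.ball_mem_nhds 0 (by norm_num)
    filter_upwards [hball] with x hx
    exact hinv x (by simpa [Metric.mem_ball, Complex.dist_eq] using hx)
  have hf1a : AnalyticOnNhd ℂ (deriv f) unitDisk := hfa.deriv
  have hf2a : AnalyticOnNhd ℂ (deriv (deriv f)) unitDisk := hf1a.deriv
  have hf3a : AnalyticOnNhd ℂ (deriv (deriv (deriv f))) unitDisk := hf2a.deriv
  have hg1a : AnalyticOnNhd ℂ (deriv g) unitDisk := hga.deriv
  have hg2a : AnalyticOnNhd ℂ (deriv (deriv g)) unitDisk := hg1a.deriv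
  have E1 : (fun x => deriv f (g x) * deriv g x) =ᶠ[nhds 0] fun _ => (1:ℂ) := by
    filter_upwards [hmem, hgmem, hid.deriv] with x hx hgx hdx
    have hcomp : deriv (fun y => f (g y)) x = deriv f (g x) * deriv g x :=
      deriv_comp x ((hfa (g x) hgx).differentiableAt) ((hga x hx).differentiableAt)
    rw [← hcomp, hdx, deriv_id]
  have hg1 : deriv g 0 = 1 := by
    have := E1.self_of_nhds
    simp only [hg0, hf1, one_mul] at this
    exact this
  have E2' : (fun x => deriv (fun y => deriv f (g y) * deriv g y) x) =ᶠ[nhds (0:ℂ)]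
      fun x => deriv (deriv f) (g x) * deriv g x * deriv g x
        + deriv f (g x) * deriv (deriv g) x := by
    filter_upwards [hmem, hgmem] with x hx hgx
    have Dc : DifferentiableAt ℂ (fun y => deriv f (g y)) x :=
      ((hf1a (g x) hgx).differentiableAt).comp x ((hga x hx).differentiableAt)
    have hcomp : deriv (fun y => deriv f (g y)) x = deriv (deriv f) (g x) * deriv g x :=
      deriv_comp x ((hf1a (g x) hgx).differentiableAt) ((hga x hx).differentiableAt)
    rw [deriv_fun_mul Dc ((hg1a x hx).differentiableAt), hcomp]
  have E2 : (fun x => deriv (deriv f) (g x) * deriv g x * deriv g x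
      + deriv f (g x) * deriv (deriv g) x) =ᶠ[nhds (0:ℂ)] fun _ => (0:ℂ) := by
    refine (E2'.symm.trans E1.deriv).trans ?_
    apply Filter.EventuallyEq.of_eq
    funext x
    simp
  have hg2 : deriv (deriv g) 0 = - deriv (deriv f) 0 := by
    have := E2.self_of_nhds
    simp only [hg0, hg1, hf1, one_mul, mul_one] at this
    linear_combination this
  have hgx0 : g 0 ∈ unitDisk := by rw [hg0]; exact h0
  have Dg : DifferentiableAt ℂ g 0 := (hga 0 h0).differentiableAt
  have Dg1 : DifferentiableAt ℂ (deriv g) 0 := (hg1a 0 h0).differentiableAt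
  have Dg2 : DifferentiableAt ℂ (deriv (deriv g)) 0 := (hg2a 0 h0).differentiableAt
  have Df1g : DifferentiableAt ℂ (fun x => deriv f (g x)) 0 :=
    ((hf1a (g 0) hgx0).differentiableAt).comp 0 Dg
  have Df2g : DifferentiableAt ℂ (fun x => deriv (deriv f) (g x)) 0 :=
    ((hf2a (g 0) hgx0).differentiableAt).comp 0 Dg
  have hcomp1 : deriv (fun x => deriv f (g x)) 0 = deriv (deriv f) (g 0) * deriv g 0 :=
    deriv_comp 0 ((hf1a (g 0) hgx0).differentiableAt) Dg
  have hcomp2 : deriv (fun x => deriv (deriv f) (g x)) 0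
      = deriv (deriv (deriv f)) (g 0) * deriv g 0 :=
    deriv_comp 0 ((hf2a (g 0) hgx0).differentiableAt) Dg
  have E3 := E2.deriv.self_of_nhds
  rw [deriv_fun_add ((Df2g.fun_mul Dg1).fun_mul Dg1) (Df1g.fun_mul Dg2),
      deriv_fun_mul (Df2g.fun_mul Dg1) Dg1,
      deriv_fun_mul Df2g Dg1, hcomp2,
      deriv_fun_mul Df1g Dg2, hcomp1,
      hg0, hg1, hf1] at E3
  simp only [deriv_const] at E3
  refine ⟨hg1, hg2, ?_⟩
  rw [hg2] at E3
  linear_combination E3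

lemma iter2_eq (F : ℂ → ℂ) : iteratedDeriv 2 F = deriv (deriv F) := by
  rw [show (2:ℕ) = 1 + 1 from rfl, iteratedDeriv_succ, iteratedDeriv_one]

lemma iter3_eq (F : ℂ → ℂ) : iteratedDeriv 3 F = deriv (deriv (deriv F)) := by
  rw [show (3:ℕ) = 2 + 1 from rfl, iteratedDeriv_succ, iter2_eq]

/-- Example 2.2: the case `k(z) = z/(1-z)` of Corollary 2.1, i.e. `f(z)/z ∈ P_m` and
`g(w)/w ∈ P_m`. -/
theorem BR_halfplane_bounds (m : ℝ) (hm : 2 ≤ m) (f g : ℂ → ℂ)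
    (hfg : BiUnivalentPair f g)
    (hf : MemPm m fun z => if z = 0 then 1 else f z / z)
    (hg : MemPm m fun w => if w = 0 then 1 else g w / w) :
    ‖mc f 2‖ ≤ Real.sqrt m ∧
      ‖mc f 3‖ ≤ m ∧
      ‖2 * mc f 2 ^ 2 - mc f 3‖ ≤ m := by
  obtain ⟨hfa, hf0, hf1, -, hga, -, hg0, hinv⟩ := hfg
  set p : ℂ → ℂ := fun z => if z = 0 then 1 else f z / z with hpdef
  set q : ℂ → ℂ := fun w => if w = 0 then 1 else g w / w with hqdef
  have hfp : ∀ z, f z = z * p z := by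
    intro z
    rcases eq_or_ne z 0 with h | h
    · simp [hpdef, h, hf0]
    · simp [hpdef, if_neg h]
      field_simp
  have hgq : ∀ w, g w = w * q w := by
    intro w
    rcases eq_or_ne w 0 with h | h
    · simp [hqdef, h, hg0]
    · simp [hqdef, if_neg h]
      field_simp
  obtain ⟨Sf1, Sf2⟩ := shift_derivs p f hf.1 hfp
  obtain ⟨Sg1, Sg2⟩ := shift_derivs q g hg.1 hgq
  obtain ⟨Ig1, Ig2, Ig3⟩ := inv_derivs f g hfa hf1 hga hg0 hinv
  -- MacLaurin coefficients in terms of derivatives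
  have m_f2 : mc f 2 = deriv (deriv f) 0 / 2 := by
    rw [mc, iter2_eq]; norm_num [Nat.factorial]
  have m_f3 : mc f 3 = deriv (deriv (deriv f)) 0 / 6 := by
    rw [mc, iter3_eq]; norm_num [Nat.factorial]
  have m_p1 : mc p 1 = deriv p 0 := by
    rw [mc, iteratedDeriv_one]; norm_num [Nat.factorial]
  have m_p2 : mc p 2 = deriv (deriv p) 0 / 2 := by
    rw [mc, iter2_eq]; norm_num [Nat.factorial]
  have m_q2 : mc q 2 = deriv (deriv q) 0 / 2 := by
    rw [mc, iter2_eq]; norm_num [Nat.factorial]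
  have key2 : mc f 2 = mc p 1 := by
    rw [m_f2, m_p1]; linear_combination Sf1 / 2
  have key3 : mc f 3 = mc p 2 := by
    rw [m_f3, m_p2]; linear_combination Sf2 / 6
  have keyq : 2 * mc f 2 ^ 2 - mc f 3 = mc q 2 := by
    rw [m_f2, m_f3, m_q2]
    linear_combination (Sg2 - Ig3) / 6
  -- coefficient bounds from P_m
  have b1 : ‖mc p 1‖ ≤ m := memPm_coeff_s7 m hm p hf 1
  have b2 : ‖mc p 2‖ ≤ m := memPm_coeff_s7 m hm p hf 2
  have b3 : ‖mc q 2‖ ≤ m := memPm_coeff_s7 m hm q hg 2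
  have h3 : ‖mc f 3‖ ≤ m := by rw [key3]; exact b2
  have hq : ‖2 * mc f 2 ^ 2 - mc f 3‖ ≤ m := by rw [keyq]; exact b3
  refine ⟨?_, h3, hq⟩
  have hsq : ‖mc f 2‖^2 ≤ m := by
    have e : mc f 2 ^ 2 = (mc f 3 + (2 * mc f 2 ^ 2 - mc f 3)) / 2 := by ring
    have : ‖mc f 2 ^ 2‖ ≤ m := by
      rw [e, norm_div]
      have h2 : ‖(2:ℂ)‖ = 2 := by simp
      rw [h2]
      have := (norm_add_le (mc f 3) (2 * mc f 2 ^ 2 - mc f 3))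
      have hb : ‖mc f 3 + (2 * mc f 2 ^ 2 - mc f 3)‖ ≤ m + m := by
        apply le_trans this
        linarith
      linarith
    rwa [norm_pow] at this
  calc ‖mc f 2‖ = Real.sqrt (‖mc f 2‖^2) :=
        (Real.sqrt_sq (norm_nonneg _)).symm
    _ ≤ Real.sqrt m := Real.sqrt_le_sqrt hsq
end
end

section
/- Let 0 ≤ β < 1 and let f(z) = z + ∑_{n≥2} a_n z^n be bi-univalent with inverse g = f⁻¹, such that Re f'(z) > β for all z ∈ 𝔻 and Re g'(w) > β for all w ∈ 𝔻. Then |a₂| ≤ √(2(1−β)/3) if 0 ≤ β ≤ 1/3, and |a₂| ≤ 1 − β if 1/3 < β < 1. -/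
open MeasureTheory Set Metric Complex

noncomputable section


-- Möbius identity
lemma mobius_normSq (a w : ℂ) :
    Complex.normSq (1 - (starRingEnd ℂ) a * w) - Complex.normSq (w - a)
      = (1 - Complex.normSq a) * (1 - Complex.normSq w) := by
  simp only [Complex.normSq_apply, Complex.sub_re, Complex.sub_im, Complex.one_re, Complex.one_im,
    Complex.mul_re, Complex.mul_im, Complex.conj_re, Complex.conj_im]
  ring

-- halfplane identity
lemma halfplane_normSq (q : ℂ) :
    Complex.normSq (q + 1) - Complex.normSq (q - 1) = 4 * q.re := by
  simp only [Complex.normSq_apply, Complex.add_re, Complex.add_im, Complex.sub_re, Complex.sub_im,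
    Complex.one_re, Complex.one_im]
  ring

/-- Schwarz–Pick type estimate at the origin for the first two coefficients. -/
lemma schwarz_two_coeffs (ω : ℂ → ℂ) (hd : DifferentiableOn ℂ ω (ball (0:ℂ) 1))
    (h0 : ω 0 = 0) (hm : MapsTo ω (ball (0:ℂ) 1) (ball (0:ℂ) 1)) :
    ‖deriv ω 0‖ ≤ 1 ∧
      ‖deriv (deriv ω) 0‖ / 2 ≤ 1 - ‖deriv ω 0‖ ^ 2 := by
  have hball : ball (0:ℂ) 1 ∈ nhds (0:ℂ) := ball_mem_nhds _ one_pos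
  set h : ℂ → ℂ := dslope ω 0 with hh
  have hdh : DifferentiableOn ℂ h (ball (0:ℂ) 1) :=
    (differentiableOn_dslope hball).mpr hd
  have hm' : MapsTo ω (ball (0:ℂ) 1) (ball (ω 0) 1) := by rwa [h0]
  have hb : ∀ z ∈ ball (0:ℂ) 1, ‖h z‖ ≤ 1 := by
    intro z hz
    simpa using Complex.norm_dslope_le_div_of_mapsTo_ball hd (hm'.mono_right ball_subset_closedBall) hz
  -- ω z = z * h z
  have hωh : ∀ z : ℂ, ω z = z * h z := by
    intro z
    have := sub_smul_dslope ω 0 z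
    simp only [sub_zero, smul_eq_mul, h0] at this
    rw [← this]
  -- analyticity of h at 0
  have han : AnalyticOnNhd ℂ h (ball (0:ℂ) 1) := hdh.analyticOnNhd isOpen_ball
  have hd0 : deriv ω 0 = h 0 := (dslope_same ω 0).symm
  -- second derivative
  have hdd : deriv (deriv ω) 0 = 2 * deriv h 0 := by
    have hev : deriv ω =ᶠ[nhds (0:ℂ)] fun z => h z + z * deriv h z := by
      filter_upwards [isOpen_ball.eventually_mem (mem_ball_self one_pos : (0:ℂ) ∈ ball 0 1)]
        with z hz
      have h1 : HasDerivAt h (deriv h z) z := ((han z hz).differentiableAt).hasDerivAt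
      have h2 : HasDerivAt (fun w => w * h w) (1 * h z + z * deriv h z) z :=
        (hasDerivAt_id z).mul h1
      have h3 : HasDerivAt ω (1 * h z + z * deriv h z) z := by
        simpa only [← funext hωh] using h2
      rw [h3.deriv]; ring
    rw [hev.deriv_eq]
    have h1 : HasDerivAt h (deriv h 0) 0 := ((han 0 (mem_ball_self one_pos)).differentiableAt).hasDerivAt
    have h1' : HasDerivAt (deriv h) (deriv (deriv h) 0) 0 :=
      ((han.deriv 0 (mem_ball_self one_pos)).differentiableAt).hasDerivAt
    have h2 : HasDerivAt (fun z => h z + z * deriv h z)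
        (deriv h 0 + (1 * deriv h 0 + 0 * deriv (deriv h) 0)) 0 :=
      h1.add ((hasDerivAt_id 0).mul h1')
    rw [h2.deriv]; ring
  have key : ‖deriv h 0‖ ≤ 1 - ‖h 0‖ ^ 2 := by
    by_cases hc : ∃ z₀ ∈ ball (0:ℂ) 1, ‖h z₀‖ = 1
    · obtain ⟨z₀, hz₀, hz₀1⟩ := hc
      have hmax : IsMaxOn (norm ∘ h) (ball (0:ℂ) 1) z₀ := by
        intro z hz
        simp only [Function.comp_apply, Set.mem_setOf_eq, hz₀1]
        exact hb z hz
      have hconst : ∀ z ∈ ball (0:ℂ) 1, h z = h z₀ := fun z hz =>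
        Complex.eqOn_of_isPreconnected_of_isMaxOn_norm (convex_ball 0 1).isPreconnected
          isOpen_ball hdh hz₀ hmax hz
      have h00 : ‖h 0‖ = 1 := by rw [hconst 0 (mem_ball_self one_pos), hz₀1]
      have hder : deriv h 0 = 0 := by
        have : h =ᶠ[nhds (0:ℂ)] fun _ => h z₀ := by
          filter_upwards [isOpen_ball.eventually_mem (mem_ball_self one_pos : (0:ℂ) ∈ ball 0 1)]
            with z hz using hconst z hz
        rw [this.deriv_eq, deriv_const]
      rw [hder, h00]; simp
    · push_neg at hc
      have hlt : ∀ z ∈ ball (0:ℂ) 1, ‖h z‖ < 1 := fun z hz =>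
        lt_of_le_of_ne (hb z hz) (hc z hz)
      set a : ℂ := h 0 with ha
      have ha1 : ‖a‖ < 1 := hlt 0 (mem_ball_self one_pos)
      set ψ : ℂ → ℂ := fun z => (h z - a) / (1 - (starRingEnd ℂ) a * h z) with hψ
      have hden : ∀ z ∈ ball (0:ℂ) 1, 1 - (starRingEnd ℂ) a * h z ≠ 0 := by
        intro z hz hne
        have : ‖(starRingEnd ℂ) a * h z‖ < 1 := by
          rw [norm_mul, Complex.norm_conj]
          calc ‖a‖ * ‖h z‖ ≤ 1 * ‖h z‖ :=
                mul_le_mul_of_nonneg_right ha1.le (norm_nonneg _)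
            _ < 1 := by simpa using hlt z hz
        rw [sub_eq_zero] at hne
        rw [← hne] at this; simp at this
      have hψd : DifferentiableOn ℂ ψ (ball (0:ℂ) 1) := by
        apply DifferentiableOn.div
        · exact hdh.sub (differentiableOn_const a)
        · exact (differentiableOn_const _).sub ((differentiableOn_const _).mul hdh)
        · exact hden
      have hψ0 : ψ 0 = 0 := by simp [hψ, ← ha]
      have hψm : MapsTo ψ (ball (0:ℂ) 1) (ball (ψ 0) 1) := by
        rw [hψ0]
        intro z hz
        rw [mem_ball_zero_iff, hψ, norm_div, div_lt_one
          (norm_pos_iff.mpr (hden z hz))]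
        rw [Complex.norm_def, Complex.norm_def]
        apply Real.sqrt_lt_sqrt (Complex.normSq_nonneg _)
        have hmob := mobius_normSq a (h z)
        have h1 : Complex.normSq a < 1 := by
          have := Complex.sq_norm a; nlinarith [norm_nonneg a]
        have h2 : Complex.normSq (h z) < 1 := by
          have := Complex.sq_norm (h z); nlinarith [norm_nonneg (h z), hlt z hz]
        nlinarith
      -- Schwarz lemma applied to ψ
      have hψm' : MapsTo ψ (ball (0:ℂ) 1) (ball (0:ℂ) 1) := by rwa [hψ0] at hψm
      have hsch : ‖deriv ψ 0‖ ≤ 1 :=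
        Complex.norm_deriv_le_one_of_mapsTo_ball hψd (hψm.mono_right ball_subset_closedBall) one_pos
      have hna : (0:ℝ) < 1 - Complex.normSq a := by
        have := Complex.sq_norm a; nlinarith [norm_nonneg a]
      have hV : (1 : ℂ) - (starRingEnd ℂ) a * h 0 = ((1 - Complex.normSq a : ℝ) : ℂ) := by
        rw [← ha, mul_comm, Complex.mul_conj]; push_cast; ring
      have hVne : (1 : ℂ) - (starRingEnd ℂ) a * h 0 ≠ 0 := hden 0 (mem_ball_self one_pos)
      have hu : HasDerivAt (fun z => h z - a) (deriv h 0) 0 :=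
        (((han 0 (mem_ball_self one_pos)).differentiableAt).hasDerivAt).sub_const a
      have hv : HasDerivAt (fun z => (1:ℂ) - (starRingEnd ℂ) a * h z)
          (-((starRingEnd ℂ) a * deriv h 0)) 0 := by
        have := (((han 0 (mem_ball_self one_pos)).differentiableAt).hasDerivAt).const_mul
          ((starRingEnd ℂ) a)
        simpa using (this.const_sub 1)
      have hdψ : HasDerivAt ψ
          ((deriv h 0 * ((1:ℂ) - (starRingEnd ℂ) a * h 0) -
            (h 0 - a) * -((starRingEnd ℂ) a * deriv h 0)) /
              ((1:ℂ) - (starRingEnd ℂ) a * h 0) ^ 2) 0 := hu.div hv hVne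
      have hval : deriv ψ 0 = deriv h 0 / ((1 - Complex.normSq a : ℝ) : ℂ) := by
        have hne : ((1 - Complex.normSq a : ℝ) : ℂ) ≠ 0 := by exact_mod_cast hna.ne'
        rw [hdψ.deriv, ← ha, sub_self, zero_mul, sub_zero, hV]
        rw [pow_two, ← div_div, mul_div_assoc, div_self hne, mul_one]
      rw [hval, norm_div, Complex.norm_of_nonneg hna.le, div_le_one hna] at hsch
      calc ‖deriv h 0‖ ≤ 1 - Complex.normSq a := hsch
        _ = 1 - ‖h 0‖ ^ 2 := by rw [← ha, Complex.sq_norm]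
  constructor
  · rw [hd0]
    simpa using hb 0 (mem_ball_self one_pos)
  · rw [hd0, hdd]
    rw [norm_mul]
    simpa using key

/-- Carathéodory-type bounds for the first two derivatives at 0 of a function with
positive real part and value 1 at 0. -/
lemma cara (q : ℂ → ℂ) (hq : DifferentiableOn ℂ q (ball (0:ℂ) 1)) (h0 : q 0 = 1)
    (hre : ∀ z ∈ ball (0:ℂ) 1, 0 < (q z).re) :
    ‖deriv q 0‖ ≤ 2 ∧ ‖deriv (deriv q) 0‖ ≤ 4 := by
  have h0m : (0:ℂ) ∈ ball (0:ℂ) 1 := mem_ball_self one_pos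
  have hqa : AnalyticOnNhd ℂ q (ball (0:ℂ) 1) := hq.analyticOnNhd isOpen_ball
  have hden : ∀ z ∈ ball (0:ℂ) 1, q z + 1 ≠ 0 := by
    intro z hz hne
    have h1 : q z = -1 := by linear_combination hne
    have h2 := hre z hz
    rw [h1] at h2
    norm_num at h2
  set ω : ℂ → ℂ := fun z => (q z - 1) / (q z + 1) with hω
  have hωd : DifferentiableOn ℂ ω (ball (0:ℂ) 1) :=
    DifferentiableOn.div (hq.sub (differentiableOn_const 1))
      (hq.add (differentiableOn_const 1)) hden
  have hω0 : ω 0 = 0 := by simp [hω, h0]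
  have hωm : MapsTo ω (ball (0:ℂ) 1) (ball (0:ℂ) 1) := by
    intro z hz
    rw [mem_ball_zero_iff, hω, norm_div, div_lt_one
      (norm_pos_iff.mpr (hden z hz))]
    rw [Complex.norm_def, Complex.norm_def]
    apply Real.sqrt_lt_sqrt (Complex.normSq_nonneg _)
    have := halfplane_normSq (q z)
    have := hre z hz
    linarith
  -- first derivative of ω
  have hω' : ∀ z ∈ ball (0:ℂ) 1, deriv ω z = 2 * deriv q z / (q z + 1) ^ 2 := by
    intro z hz
    have hq' : HasDerivAt q (deriv q z) z := ((hqa z hz).differentiableAt).hasDerivAt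
    have h1 : HasDerivAt ω
        ((deriv q z * (q z + 1) - (q z - 1) * deriv q z) / (q z + 1) ^ 2) z :=
      (hq'.sub_const 1).div (hq'.add_const 1) (hden z hz)
    rw [h1.deriv]; ring_nf
  have hω'0 : deriv ω 0 = deriv q 0 / 2 := by
    rw [hω' 0 h0m, h0]; ring_nf
  -- second derivative of ω
  have hω'' : deriv (deriv ω) 0 = deriv (deriv q) 0 / 2 - (deriv q 0) ^ 2 / 2 := by
    have hev : deriv ω =ᶠ[nhds (0:ℂ)] fun z => 2 * deriv q z / (q z + 1) ^ 2 := by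
      filter_upwards [isOpen_ball.eventually_mem h0m] with z hz using hω' z hz
    rw [hev.deriv_eq]
    have hq' : HasDerivAt q (deriv q 0) 0 := ((hqa 0 h0m).differentiableAt).hasDerivAt
    have hq'' : HasDerivAt (deriv q) (deriv (deriv q) 0) 0 :=
      ((hqa.deriv 0 h0m).differentiableAt).hasDerivAt
    have hu : HasDerivAt (fun z => 2 * deriv q z) (2 * deriv (deriv q) 0) 0 := hq''.const_mul 2
    have hv : HasDerivAt (fun z => (q z + 1) ^ 2) (2 * (q 0 + 1) ^ 1 * deriv q 0) 0 := by
      simpa using (hq'.add_const 1).fun_pow 2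
    have hvne : (q 0 + 1) ^ 2 ≠ 0 := pow_ne_zero 2 (hden 0 h0m)
    have h2 : HasDerivAt (fun z => 2 * deriv q z / (q z + 1) ^ 2)
        ((2 * deriv (deriv q) 0 * (q 0 + 1) ^ 2 -
          2 * deriv q 0 * (2 * (q 0 + 1) ^ 1 * deriv q 0)) / ((q 0 + 1) ^ 2) ^ 2) 0 :=
      hu.div hv hvne
    rw [h2.deriv, h0]
    have : ((1:ℂ) + 1) ≠ 0 := by norm_num
    field_simp
    ring
  obtain ⟨k1, k2⟩ := schwarz_two_coeffs ω hωd hω0 hωm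
  rw [hω'0] at k1 k2
  rw [hω''] at k2
  rw [norm_div] at k1
  simp only [Complex.norm_two] at k1
  constructor
  · linarith [k1, (div_le_iff₀ (by norm_num : (0:ℝ) < 2)).mp k1]
  · -- |q''| ≤ |q'' - q'^2| + |q'^2|
    have htri : ‖deriv (deriv q) 0‖ ≤
        ‖deriv (deriv q) 0 - (deriv q 0) ^ 2‖ + ‖(deriv q 0) ^ 2‖ := by
      calc ‖deriv (deriv q) 0‖
          = ‖(deriv (deriv q) 0 - (deriv q 0) ^ 2) + (deriv q 0) ^ 2‖ := by ring_nf
        _ ≤ _ := norm_add_le _ _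
    have he : deriv (deriv q) 0 / 2 - (deriv q 0) ^ 2 / 2
        = (deriv (deriv q) 0 - (deriv q 0) ^ 2) / 2 := by ring
    rw [he, norm_div] at k2
    simp only [Complex.norm_two] at k2
    have hsq : ‖(deriv q 0) ^ 2‖ = (‖deriv q 0‖) ^ 2 := norm_pow _ 2
    have habs : ‖deriv q 0 / 2‖ ^ 2 = (‖deriv q 0‖) ^ 2 / 4 := by
      rw [norm_div]; simp [Complex.norm_two]; ring
    rw [habs] at k2
    nlinarith [norm_nonneg (deriv (deriv q) 0 - (deriv q 0) ^ 2)]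

/-- Bounds on the second and third derivatives at 0 for a function whose derivative has
real part greater than `β` on the unit disk and derivative 1 at 0. -/
lemma beta_bounds (β : ℝ) (hβ1 : β < 1) (F : ℂ → ℂ)
    (hFa : AnalyticOnNhd ℂ F (ball (0:ℂ) 1)) (hF0 : deriv F 0 = 1)
    (hre : ∀ z ∈ ball (0:ℂ) 1, β < (deriv F z).re) :
    ‖deriv (deriv F) 0‖ ≤ 2 * (1 - β) ∧
      ‖deriv (deriv (deriv F)) 0‖ ≤ 4 * (1 - β) := by
  have h0m : (0:ℂ) ∈ ball (0:ℂ) 1 := mem_ball_self one_pos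
  have hpos : (0:ℝ) < 1 - β := by linarith
  have hcne : ((1 - β : ℝ) : ℂ) ≠ 0 := by exact_mod_cast hpos.ne'
  set c : ℂ := (((1 - β : ℝ) : ℂ))⁻¹ with hc
  have hcabs : ‖c‖ = (1 - β)⁻¹ := by
    rw [hc, norm_inv, Complex.norm_of_nonneg hpos.le]
  set q : ℂ → ℂ := fun z => (deriv F z - (β:ℂ)) * c with hqdef
  have hP : AnalyticOnNhd ℂ (deriv F) (ball (0:ℂ) 1) := hFa.deriv
  have hq : DifferentiableOn ℂ q (ball (0:ℂ) 1) :=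
    ((hP.differentiableOn.sub (differentiableOn_const _)).mul (differentiableOn_const c))
  have hq0 : q 0 = 1 := by
    rw [hqdef]; simp only [hF0, hc]
    rw [← Complex.ofReal_one, ← Complex.ofReal_sub]
    exact mul_inv_cancel₀ hcne
  have hqre : ∀ z ∈ ball (0:ℂ) 1, 0 < (q z).re := by
    intro z hz
    rw [hqdef]
    simp only [hc, ← div_eq_mul_inv]
    rw [Complex.div_ofReal_re]
    apply div_pos _ hpos
    simp only [Complex.sub_re, Complex.ofReal_re]
    linarith [hre z hz]
  have hq' : ∀ z ∈ ball (0:ℂ) 1, deriv q z = deriv (deriv F) z * c := by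
    intro z hz
    have h1 : HasDerivAt (deriv F) (deriv (deriv F) z) z :=
      ((hP z hz).differentiableAt).hasDerivAt
    have h2 : HasDerivAt q (deriv (deriv F) z * c) z := (h1.sub_const _).mul_const c
    exact h2.deriv
  have hq'' : deriv (deriv q) 0 = deriv (deriv (deriv F)) 0 * c := by
    have hev : deriv q =ᶠ[nhds (0:ℂ)] fun z => deriv (deriv F) z * c := by
      filter_upwards [isOpen_ball.eventually_mem h0m] with z hz using hq' z hz
    rw [hev.deriv_eq]
    have h1 : HasDerivAt (deriv (deriv F)) (deriv (deriv (deriv F)) 0) 0 :=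
      ((hP.deriv 0 h0m).differentiableAt).hasDerivAt
    exact (h1.mul_const c).deriv
  obtain ⟨k1, k2⟩ := cara q hq hq0 hqre
  rw [hq' 0 h0m, norm_mul, hcabs] at k1
  rw [hq'', norm_mul, hcabs] at k2
  constructor
  · rw [← le_div_iff₀ (by positivity)] at k1
    calc ‖deriv (deriv F) 0‖ ≤ 2 / (1 - β)⁻¹ := k1
      _ = 2 * (1 - β) := by field_simp
  · rw [← le_div_iff₀ (by positivity)] at k2
    calc ‖deriv (deriv (deriv F)) 0‖ ≤ 4 / (1 - β)⁻¹ := k2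
      _ = 4 * (1 - β) := by field_simp

/-- Derivative relations for an inverse function pair. -/
lemma inverse_derivs (f g : ℂ → ℂ) (hfa : AnalyticOnNhd ℂ f (ball (0:ℂ) 1))
    (hf0' : deriv f 0 = 1) (hga : AnalyticOnNhd ℂ g (ball (0:ℂ) 1)) (hg0 : g 0 = 0)
    (hinv : ∀ w : ℂ, ‖w‖ < 1 / 4 → f (g w) = w) :
    deriv g 0 = 1 ∧ deriv (deriv (deriv g)) 0 =
      3 * (deriv (deriv f) 0) ^ 2 - deriv (deriv (deriv f)) 0 := by
  have h0m : (0:ℂ) ∈ ball (0:ℂ) 1 := mem_ball_self one_pos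
  set P : ℂ → ℂ := deriv f with hP
  set P2 : ℂ → ℂ := deriv (deriv f) with hP2
  set P3 : ℂ → ℂ := deriv (deriv (deriv f)) with hP3
  set Q : ℂ → ℂ := deriv g with hQ
  set Q2 : ℂ → ℂ := deriv (deriv g) with hQ2
  have hPa : AnalyticOnNhd ℂ P (ball (0:ℂ) 1) := hfa.deriv
  have hP2a : AnalyticOnNhd ℂ P2 (ball (0:ℂ) 1) := hPa.deriv
  have hP3a : AnalyticOnNhd ℂ P3 (ball (0:ℂ) 1) := hP2a.deriv
  have hQa : AnalyticOnNhd ℂ Q (ball (0:ℂ) 1) := hga.deriv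
  have hQ2a : AnalyticOnNhd ℂ Q2 (ball (0:ℂ) 1) := hQa.deriv
  -- the open set V
  set V : Set ℂ := (ball (0:ℂ) 1 ∩ g ⁻¹' (ball (0:ℂ) 1)) ∩ ball (0:ℂ) (1/4) with hV
  have hVopen : IsOpen V :=
    ((hga.continuousOn.isOpen_inter_preimage isOpen_ball isOpen_ball).inter isOpen_ball)
  have h0V : (0:ℂ) ∈ V := by
    refine ⟨⟨h0m, ?_⟩, by simp⟩
    simp [hg0]
  have hVb : ∀ w ∈ V, w ∈ ball (0:ℂ) 1 := fun w hw => hw.1.1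
  have hVg : ∀ w ∈ V, g w ∈ ball (0:ℂ) 1 := fun w hw => hw.1.2
  have hVinv : ∀ w ∈ V, f (g w) = w := fun w hw =>
    hinv w (by simpa using mem_ball_zero_iff.mp hw.2)
  -- Step 1
  have step1 : ∀ w ∈ V, P (g w) * Q w = 1 := by
    intro w hw
    have hgw : HasDerivAt g (Q w) w := ((hga w (hVb w hw)).differentiableAt).hasDerivAt
    have hfw : HasDerivAt f (P (g w)) (g w) :=
      ((hfa (g w) (hVg w hw)).differentiableAt).hasDerivAt
    have hcomp : HasDerivAt (f ∘ g) (P (g w) * Q w) w := hfw.comp w hgw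
    have hev : (f ∘ g) =ᶠ[nhds w] id := by
      filter_upwards [hVopen.mem_nhds hw] with x hx using hVinv x hx
    have := hev.deriv_eq
    rw [hcomp.deriv, deriv_id] at this
    exact this
  -- derivatives of composed functions on V
  have hPg : ∀ w ∈ V, HasDerivAt (fun x => P (g x)) (P2 (g w) * Q w) w := by
    intro w hw
    exact (((hPa (g w) (hVg w hw)).differentiableAt).hasDerivAt).comp w
      ((hga w (hVb w hw)).differentiableAt).hasDerivAt
  have hP2g : ∀ w ∈ V, HasDerivAt (fun x => P2 (g x)) (P3 (g w) * Q w) w := by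
    intro w hw
    exact (((hP2a (g w) (hVg w hw)).differentiableAt).hasDerivAt).comp w
      ((hga w (hVb w hw)).differentiableAt).hasDerivAt
  -- Step 2
  have step2 : ∀ w ∈ V, (P2 (g w) * Q w) * Q w + P (g w) * Q2 w = 0 := by
    intro w hw
    have hQw : HasDerivAt Q (Q2 w) w := ((hQa w (hVb w hw)).differentiableAt).hasDerivAt
    have hprod : HasDerivAt (fun x => P (g x) * Q x)
        ((P2 (g w) * Q w) * Q w + P (g w) * Q2 w) w := (hPg w hw).mul hQw
    have hev : (fun x => P (g x) * Q x) =ᶠ[nhds w] fun _ => (1:ℂ) := by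
      filter_upwards [hVopen.mem_nhds hw] with x hx using step1 x hx
    have := hev.deriv_eq
    rw [hprod.deriv, deriv_const] at this
    exact this
  -- values at 0
  have hQ0 : Q 0 = 1 := by
    have := step1 0 h0V
    rw [hg0, hf0', one_mul] at this
    exact this
  have hQ20 : Q2 0 = -P2 0 := by
    have := step2 0 h0V
    rw [hg0, hQ0, hf0'] at this
    linear_combination this
  -- Step 3: differentiate step2 at 0
  have hQw : HasDerivAt Q (Q2 0) 0 := ((hQa 0 h0m).differentiableAt).hasDerivAt
  have hQ2w : HasDerivAt Q2 (deriv (deriv (deriv g)) 0) 0 :=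
    ((hQ2a 0 h0m).differentiableAt).hasDerivAt
  have hK : HasDerivAt (fun x => (P2 (g x) * Q x) * Q x + P (g x) * Q2 x)
      ((((P3 (g 0) * Q 0) * Q 0 + P2 (g 0) * Q2 0) * Q 0 + (P2 (g 0) * Q 0) * Q2 0)
        + ((P2 (g 0) * Q 0) * Q2 0 + P (g 0) * deriv (deriv (deriv g)) 0)) 0 :=
    ((((hP2g 0 h0V).mul hQw).mul hQw).add ((hPg 0 h0V).mul hQ2w))
  have hev : (fun x => (P2 (g x) * Q x) * Q x + P (g x) * Q2 x) =ᶠ[nhds (0:ℂ)]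
      fun _ => (0:ℂ) := by
    filter_upwards [hVopen.mem_nhds h0V] with x hx using step2 x hx
  have h3 := hev.deriv_eq
  rw [hK.deriv, deriv_const] at h3
  rw [hg0, hQ0, hQ20, hf0'] at h3
  exact ⟨hQ0, by linear_combination h3⟩

/-- Corollary 2.2, bound for `|a₂|` in the class `B(β)` of Srivastava et al. -/
theorem B_beta_a2_bound (β : ℝ) (hβ0 : 0 ≤ β) (hβ1 : β < 1) (f g : ℂ → ℂ)
    (hfg : BiUnivalentPair f g)
    (hf : ∀ z ∈ unitDisk, β < (deriv f z).re)
    (hg : ∀ w ∈ unitDisk, β < (deriv g w).re) :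
    (β ≤ 1 / 3 → ‖mc f 2‖ ≤ Real.sqrt (2 * (1 - β) / 3)) ∧
      (1 / 3 < β → ‖mc f 2‖ ≤ 1 - β) := by
  obtain ⟨hfa, hf00, hf0', _, hga, _, hg0, hinv⟩ := hfg
  rw [show unitDisk = ball (0:ℂ) 1 from rfl] at hfa hga hf hg
  obtain ⟨hg0', hrel⟩ := inverse_derivs f g hfa hf0' hga hg0 hinv
  obtain ⟨hA2, hA3⟩ := beta_bounds β hβ1 f hfa hf0' hf
  obtain ⟨_, hB3⟩ := beta_bounds β hβ1 g hga hg0' hg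
  set A2 : ℂ := deriv (deriv f) 0 with hA2def
  have hmc : mc f 2 = A2 / 2 := by
    rw [mc, iteratedDeriv_succ, iteratedDeriv_one]
    norm_num [hA2def]
  have habs : ‖mc f 2‖ = ‖A2‖ / 2 := by
    rw [hmc, norm_div, Complex.norm_two]
  constructor
  · intro _
    -- 3 |A2|^2 ≤ 8 (1 - β)
    have h3A2 : 3 * (‖A2‖) ^ 2 ≤ 8 * (1 - β) := by
      have h1 : ‖3 * A2 ^ 2‖ ≤ 8 * (1 - β) := by
        have : (3:ℂ) * A2 ^ 2 = deriv (deriv (deriv g)) 0 + deriv (deriv (deriv f)) 0 := by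
          rw [hrel]; ring
        rw [this]
        calc ‖deriv (deriv (deriv g)) 0 + deriv (deriv (deriv f)) 0‖
            ≤ ‖deriv (deriv (deriv g)) 0‖ + ‖deriv (deriv (deriv f)) 0‖ :=
              norm_add_le _ _
          _ ≤ 4 * (1 - β) + 4 * (1 - β) := add_le_add hB3 hA3
          _ = 8 * (1 - β) := by ring
      calc 3 * (‖A2‖) ^ 2 = ‖3 * A2 ^ 2‖ := by
            rw [norm_mul, norm_pow]; norm_num
        _ ≤ 8 * (1 - β) := h1
    rw [habs]
    rw [Real.le_sqrt (by positivity) (by nlinarith)]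
    rw [div_pow]
    nlinarith
  · intro _
    rw [habs]
    linarith
end
end
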